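/- arXiv:1710.07093 — 5 statements merged into one kernel-verified Lean document; each statement's English description precedes it below -/
import Mathlib

section
/- For any commutative ring R, the element u − v (the difference of the two variables) is a nonzerodivisor in the two-variable formal power series ring R⟦u,v⟧. -/
open Finsupp

/-- `u - v` is a nonzerodivisor in the two-variable formal power series ring `R⟦u,v⟧`. -/
theorem stmt_2 (R : Type*) [CommRing R] :
    (MvPowerSeries.X 0 - MvPowerSeries.X 1 : MvPowerSeries (Fin 2) R)
      ∈ nonZeroDivisors (MvPowerSeries (Fin 2) R) := by
  rw [mem_nonZeroDivisors_iff_right]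
  intro g hg
  have h01 : g * MvPowerSeries.X 0 = g * MvPowerSeries.X 1 := by
    refine sub_eq_zero.mp ?_
    rw [← mul_sub]; exact hg
  have key : ∀ n : ℕ, ∀ d : Fin 2 →₀ ℕ, d 1 = n → MvPowerSeries.coeff d g = 0 := by
    intro n
    induction n with
    | zero =>
      intro d hd
      have h1 : MvPowerSeries.coeff (d + single (0 : Fin 2) 1) (g * MvPowerSeries.X 0)
          = MvPowerSeries.coeff d g := by
        rw [MvPowerSeries.X_def, MvPowerSeries.coeff_add_mul_monomial, mul_one]
      have h2 : MvPowerSeries.coeff (d + single (0 : Fin 2) 1) (g * MvPowerSeries.X 1)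
          = 0 := by
        rw [MvPowerSeries.X_def, MvPowerSeries.coeff_mul_monomial, if_neg]
        rw [Finsupp.single_le_iff]
        simp [hd]
      rw [← h1, h01, h2]
    | succ m ih =>
      intro d hd
      have h1 : MvPowerSeries.coeff (d + single (0 : Fin 2) 1) (g * MvPowerSeries.X 0)
          = MvPowerSeries.coeff d g := by
        rw [MvPowerSeries.X_def, MvPowerSeries.coeff_add_mul_monomial, mul_one]
      have hle : single (1 : Fin 2) 1 ≤ d + single (0 : Fin 2) 1 := by
        rw [Finsupp.single_le_iff]
        simp [hd]
      have h2 : MvPowerSeries.coeff (d + single (0 : Fin 2) 1) (g * MvPowerSeries.X 1)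
          = MvPowerSeries.coeff (d + single (0 : Fin 2) 1 - single (1 : Fin 2) 1) g := by
        rw [MvPowerSeries.X_def, MvPowerSeries.coeff_mul_monomial, if_pos hle, mul_one]
      have h3 : ((d + single (0 : Fin 2) 1 - single (1 : Fin 2) 1 : Fin 2 →₀ ℕ)) 1 = m := by
        simp [Finsupp.tsub_apply, Finsupp.single_apply, hd]
      rw [← h1, h01, h2, ih _ h3]
  ext d
  simpa using key (d 1) d rfl
end

section
/- Let R be a commutative ring and G(u,v) ∈ R⟦u,v⟧ a formal power series in two variables. If the one-variable power series G(u,u) ∈ R⟦u⟧ obtained by substituting v := u is zero, then u − v divides G(u,v) in R⟦u,v⟧. -/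
/-- Substitution of two power series for the two variables of an element of
`R⟦u,v⟧ = MvPowerSeries (Fin 2) R`. -/
noncomputable def subst2 {R : Type*} [CommRing R] {τ : Type*} (a b : MvPowerSeries τ R)
    (F : MvPowerSeries (Fin 2) R) : MvPowerSeries τ R :=
  fun e => ∑ᶠ d : Fin 2 →₀ ℕ,
    (MvPowerSeries.coeff d F) * (MvPowerSeries.coeff e (a ^ (d 0) * b ^ (d 1)))

lemma fin2_decomp (e : Fin 2 →₀ ℕ) :
    Finsupp.single 0 (e 0) + Finsupp.single 1 (e 1) = e := by
  ext x
  fin_cases x <;> simp [Finsupp.single_apply]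

/-- If `G(u,u) = 0` in `R⟦u⟧` then `u - v` divides `G(u,v)` in `R⟦u,v⟧`. -/
theorem stmt_3 {R : Type*} [CommRing R] (G : MvPowerSeries (Fin 2) R)
    (hG : subst2 PowerSeries.X PowerSeries.X G = 0) :
    (MvPowerSeries.X 0 - MvPowerSeries.X 1 : MvPowerSeries (Fin 2) R) ∣ G := by
  classical
  set g : ℕ → ℕ → R :=
    fun i j => MvPowerSeries.coeff (Finsupp.single 0 i + Finsupp.single 1 j) G with hgdef
  have gdef : ∀ e : Fin 2 →₀ ℕ, MvPowerSeries.coeff e G = g (e 0) (e 1) := by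
    intro e
    rw [hgdef]
    simp only
    rw [fin2_decomp]
  -- translate the hypothesis
  have hA : ∀ n : ℕ, ∑ p ∈ Finset.HasAntidiagonal.antidiagonal n, g p.1 p.2 = 0 := by
    intro n
    have h := congrFun hG (Finsupp.single () n)
    have h' : (∑ᶠ d : Fin 2 →₀ ℕ, (MvPowerSeries.coeff d G) *
        (MvPowerSeries.coeff (Finsupp.single () n)
          (PowerSeries.X ^ (d 0) * PowerSeries.X ^ (d 1) : PowerSeries R))) = 0 := h
    have key : ∀ d : Fin 2 →₀ ℕ, (MvPowerSeries.coeff d G) *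
        (MvPowerSeries.coeff (Finsupp.single () n)
          (PowerSeries.X ^ (d 0) * PowerSeries.X ^ (d 1) : PowerSeries R)) =
        if d 0 + d 1 = n then g (d 0) (d 1) else 0 := by
      intro d
      rw [← pow_add]
      rw [show (PowerSeries.X : PowerSeries R) = MvPowerSeries.X () from rfl,
        MvPowerSeries.coeff_X_pow]
      rw [mul_ite, mul_one, mul_zero]
      rw [gdef d]
      exact if_congr ⟨fun h => ((Finsupp.single_injective ()).eq_iff.mp h).symm,
        fun h => by rw [h]⟩ rfl rfl
    rw [finsum_congr key] at h'
    set emb : ℕ × ℕ ↪ (Fin 2 →₀ ℕ) :=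
      ⟨fun p => Finsupp.single 0 p.1 + Finsupp.single 1 p.2, by
        intro p q hpq
        have h0 := DFunLike.congr_fun hpq (0 : Fin 2)
        have h1 := DFunLike.congr_fun hpq (1 : Fin 2)
        simp [Finsupp.single_apply] at h0 h1
        exact Prod.ext h0 h1⟩ with hemb
    have hsupp : (Function.support fun d : Fin 2 →₀ ℕ =>
        if d 0 + d 1 = n then g (d 0) (d 1) else 0) ⊆
        ↑((Finset.HasAntidiagonal.antidiagonal n).map emb) := by
      intro d hd
      simp only [Function.mem_support] at hd
      by_cases hc : d 0 + d 1 = n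
      · simp only [Finset.coe_map, Set.mem_image, Finset.mem_coe, Finset.HasAntidiagonal.mem_antidiagonal]
        exact ⟨(d 0, d 1), hc, fin2_decomp d⟩
      · exact absurd (if_neg hc) hd
    rw [finsum_eq_sum_of_support_subset _ hsupp, Finset.sum_map] at h'
    rw [← h']
    apply Finset.sum_congr rfl
    intro p hp
    rw [Finset.HasAntidiagonal.mem_antidiagonal] at hp
    have e0 : (emb p) 0 = p.1 := by
      show (Finsupp.single (0 : Fin 2) p.1 + Finsupp.single 1 p.2 : Fin 2 →₀ ℕ) 0 = p.1
      simp [Finsupp.single_apply]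
    have e1 : (emb p) 1 = p.2 := by
      show (Finsupp.single (0 : Fin 2) p.1 + Finsupp.single 1 p.2 : Fin 2 →₀ ℕ) 1 = p.2
      simp [Finsupp.single_apply]
    rw [e0, e1, if_pos hp]
  -- construct the cofactor
  set S : ℕ → ℕ → R :=
    fun i j => ∑ k ∈ Finset.range (j + 1), g (i + 1 + k) (j - k) with hSdef
  set H : MvPowerSeries (Fin 2) R := fun e => S (e 0) (e 1) with hHdef
  refine ⟨H, ?_⟩
  ext e
  have hXmul : ∀ s : Fin 2, MvPowerSeries.coeff e (MvPowerSeries.X s * H) =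
      if 1 ≤ e s then S ((e - Finsupp.single s 1 : Fin 2 →₀ ℕ) 0) ((e - Finsupp.single s 1 : Fin 2 →₀ ℕ) 1) else 0 := by
    intro s
    rw [MvPowerSeries.X_def, MvPowerSeries.coeff_monomial_mul, one_mul]
    rw [MvPowerSeries.coeff_apply]
    exact if_congr Finsupp.single_le_iff rfl rfl
  have sub_app : ∀ (s t : Fin 2), ((e - Finsupp.single s 1 : Fin 2 →₀ ℕ) t) =
      if s = t then e t - 1 else e t := by
    intro s t
    rw [Finsupp.tsub_apply, Finsupp.single_apply]
    split_ifs <;> simp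
  rw [sub_mul, map_sub, hXmul 0, hXmul 1, gdef e]
  rw [sub_app 0 0, sub_app 0 1, sub_app 1 0, sub_app 1 1]
  simp only [if_pos rfl, if_true, if_neg (by decide : ¬ (0 : Fin 2) = 1),
    if_neg (by decide : ¬ (1 : Fin 2) = 0)]
  set i := e 0
  set j := e 1
  clear_value i j
  rcases Nat.eq_zero_or_pos i with hi | hi <;> rcases Nat.eq_zero_or_pos j with hj | hj
  · -- i = 0, j = 0
    subst hi hj
    have h0 := hA 0
    rw [Finset.Nat.sum_antidiagonal_eq_sum_range_succ_mk] at h0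
    simp only [Finset.sum_range_one] at h0
    simp [h0]
  · -- i = 0, 1 ≤ j
    subst hi
    rw [if_neg (show ¬ (1:ℕ) ≤ 0 by omega), if_pos (show (1:ℕ) ≤ j by omega)]
    have h0 := hA j
    rw [Finset.Nat.sum_antidiagonal_eq_sum_range_succ_mk, Finset.sum_range_succ'] at h0
    have hS : S 0 (j - 1) = ∑ k ∈ Finset.range j, g (k + 1) (j - (k + 1)) := by
      rw [hSdef]
      simp only
      rw [show j - 1 + 1 = j from by omega]
      apply Finset.sum_congr rfl
      intro k hk
      rw [Finset.mem_range] at hk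
      rw [show 0 + 1 + k = k + 1 from by omega, show j - 1 - k = j - (k + 1) from by omega]
    rw [hS]
    simp only [Nat.sub_zero] at h0
    linear_combination h0
  · -- 1 ≤ i, j = 0
    subst hj
    rw [if_pos (show (1:ℕ) ≤ i by omega), if_neg (show ¬ (1:ℕ) ≤ 0 by omega)]
    rw [hSdef]
    simp [show i - 1 + 1 = i from by omega]
  · -- 1 ≤ i, 1 ≤ j
    rw [if_pos (show (1:ℕ) ≤ i by omega), if_pos (show (1:ℕ) ≤ j by omega)]
    have h1 : S (i - 1) j = g i j + ∑ k ∈ Finset.range j, g (i + 1 + k) (j - 1 - k) := by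
      rw [hSdef]
      simp only
      rw [Finset.sum_range_succ']
      rw [show i - 1 + 1 + 0 = i from by omega, Nat.sub_zero]
      rw [add_comm]
      congr 1
      apply Finset.sum_congr rfl
      intro k hk
      rw [show i + (k + 1) = i + 1 + k from by omega,
        show j - (k + 1) = j - 1 - k from by omega]
    have h2 : S i (j - 1) = ∑ k ∈ Finset.range j, g (i + 1 + k) (j - 1 - k) := by
      rw [hSdef]
      simp only
      rw [show j - 1 + 1 = j from by omega]
    rw [h1, h2]
    ring
end

section
/- Let R be a commutative ring, F a formal group law over R, and χ its formal inverse. Then there exists a unique formal power series P(u,v) ∈ R⟦u,v⟧ such that F(u, χ(v)) = (u − v)·P(u,v) in R⟦u,v⟧, where F(u, χ(v)) denotes the substitution of u and χ(v) for the two variables of F. -/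
/-- A (one-dimensional, commutative) formal group law over `R`:
`F(u,0) = u`, `F(0,v) = v`, `F(u,v) = F(v,u)` and `F(F(u,v),w) = F(u,F(v,w))`. -/
def IsFormalGroupLaw {R : Type*} [CommRing R] (F : MvPowerSeries (Fin 2) R) : Prop :=
  subst2 PowerSeries.X 0 F = PowerSeries.X ∧
  subst2 0 PowerSeries.X F = PowerSeries.X ∧
  subst2 (MvPowerSeries.X 1) (MvPowerSeries.X 0) F = F ∧
  subst2 (subst2 (MvPowerSeries.X (0 : Fin 3)) (MvPowerSeries.X 1) F) (MvPowerSeries.X 2) F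
    = subst2 (MvPowerSeries.X (0 : Fin 3)) (subst2 (MvPowerSeries.X 1) (MvPowerSeries.X 2) F) F

/-- Substitution of a power series (with zero constant coefficient) for the variable of a
one-variable formal power series. -/
noncomputable def subst1 {R : Type*} [CommRing R] {τ : Type*} (a : MvPowerSeries τ R)
    (f : PowerSeries R) : MvPowerSeries τ R :=
  fun e => ∑ᶠ n : ℕ, (PowerSeries.coeff n f) * (MvPowerSeries.coeff e (a ^ n))

open Finsupp MvPowerSeries

namespace Stmt4Aux

variable {R : Type*} [CommRing R]

/-- The finsupp `(i, j)` on `Fin 2`. -/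
noncomputable def fs (i j : ℕ) : Fin 2 →₀ ℕ := Finsupp.single 0 i + Finsupp.single 1 j

@[simp] lemma fs_apply0 (i j : ℕ) : fs i j 0 = i := by
  simp [fs, Finsupp.single_apply]

@[simp] lemma fs_apply1 (i j : ℕ) : fs i j 1 = j := by
  simp [fs, Finsupp.single_apply]

lemma eq_fs (e : Fin 2 →₀ ℕ) : e = fs (e 0) (e 1) := by
  ext a
  fin_cases a
  · simp
  · simp

lemma fs_zero_left (j : ℕ) : fs 0 j = Finsupp.single 1 j := by
  simp [fs]

lemma degree_add {σ : Type*} (d e : σ →₀ ℕ) : (d + e).degree = d.degree + e.degree := by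
  rw [degree_eq_weight_one, map_add]

lemma degree_single {σ : Type*} (s : σ) (n : ℕ) : (Finsupp.single s n).degree = n := by
  classical
  rcases eq_or_ne n 0 with rfl | hn
  · simp [Finsupp.degree]
  · exact Finsupp.degree_single s n

lemma degree_fs (i j : ℕ) : (fs i j).degree = i + j := by
  rw [fs, degree_add, degree_single, degree_single]

lemma degree_eq_sum (e : Fin 2 →₀ ℕ) : e.degree = e 0 + e 1 := by
  conv_lhs => rw [eq_fs e]
  rw [degree_fs]


lemma coeff_mul_eq_zero {τ : Type*} (A B : MvPowerSeries τ R) (p q : ℕ)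
    (hA : ∀ e : τ →₀ ℕ, e.degree < p → MvPowerSeries.coeff e A = 0)
    (hB : ∀ e : τ →₀ ℕ, e.degree < q → MvPowerSeries.coeff e B = 0) :
    ∀ e : τ →₀ ℕ, e.degree < p + q → MvPowerSeries.coeff e (A * B) = 0 := by
  classical
  intro e he
  rw [coeff_mul]
  apply Finset.sum_eq_zero
  rintro ⟨d, d'⟩ hd
  rw [Finset.HasAntidiagonal.mem_antidiagonal] at hd
  have hdeg : d.degree + d'.degree < p + q := by
    rw [← degree_add, hd]; exact he
  rcases lt_or_ge d.degree p with h | h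
  · rw [hA d h, zero_mul]
  · rw [hB d' (by omega), mul_zero]

lemma coeff_pow_eq_zero {τ : Type*} (a : MvPowerSeries τ R)
    (ha : MvPowerSeries.constantCoeff a = 0) (p : ℕ) :
    ∀ e : τ →₀ ℕ, e.degree < p → MvPowerSeries.coeff e (a ^ p) = 0 := by
  induction p with
  | zero => exact fun e he => absurd he (Nat.not_lt_zero _)
  | succ p ih =>
    intro e he
    rw [pow_succ]
    refine coeff_mul_eq_zero _ _ p 1 ih (fun e' he' => ?_) e he
    have : e' = 0 := by rwa [Nat.lt_one_iff, Finsupp.degree_eq_zero_iff] at he'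
    rw [this, coeff_zero_eq_constantCoeff, ha]

lemma coeff_pow_mul_pow_eq_zero {τ : Type*} (a b : MvPowerSeries τ R)
    (ha : MvPowerSeries.constantCoeff a = 0)
    (hb : MvPowerSeries.constantCoeff b = 0) (p q : ℕ) (e : τ →₀ ℕ)
    (he : e.degree < p + q) : MvPowerSeries.coeff e (a ^ p * b ^ q) = 0 :=
  coeff_mul_eq_zero _ _ p q (coeff_pow_eq_zero a ha p) (coeff_pow_eq_zero b hb q) e he

lemma coeff_X_pow_mul {τ : Type*} [DecidableEq τ] (s : τ) (p : ℕ) (N : MvPowerSeries τ R)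
    (e : τ →₀ ℕ) :
    MvPowerSeries.coeff e (MvPowerSeries.X s ^ p * N)
      = if Finsupp.single s p ≤ e then MvPowerSeries.coeff (e - Finsupp.single s p) N
        else 0 := by
  rw [coeff_mul]
  split_ifs with h
  · rw [Finset.sum_eq_single (Finsupp.single s p, e - Finsupp.single s p)]
    · rw [coeff_X_pow, if_pos rfl, one_mul]
    · rintro ⟨d, d'⟩ hd hne
      rw [Finset.HasAntidiagonal.mem_antidiagonal] at hd
      rw [coeff_X_pow]
      split_ifs with hds
      · simp only at hd hds
        subst hds
        have hd' : d' = e - Finsupp.single s p := eq_tsub_of_add_eq (by rw [add_comm]; exact hd)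
        exact absurd (by rw [hd']) hne
      · exact zero_mul _
    · intro hmem
      exact absurd (Finset.HasAntidiagonal.mem_antidiagonal.2 (add_tsub_cancel_of_le h)) hmem
  · apply Finset.sum_eq_zero
    rintro ⟨d, d'⟩ hd
    rw [Finset.HasAntidiagonal.mem_antidiagonal] at hd
    rw [coeff_X_pow]
    split_ifs with hds
    · exact absurd (hd ▸ hds ▸ le_self_add) h
    · exact zero_mul _


lemma coeff_subst2 {τ : Type*} (a b : MvPowerSeries τ R)
    (ha : MvPowerSeries.constantCoeff a = 0)
    (hb : MvPowerSeries.constantCoeff b = 0)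
    (F : MvPowerSeries (Fin 2) R) (e : τ →₀ ℕ) :
    MvPowerSeries.coeff e (subst2 a b F)
      = ∑ d ∈ Finset.Iic (fs e.degree e.degree),
          MvPowerSeries.coeff d F * MvPowerSeries.coeff e (a ^ (d 0) * b ^ (d 1)) := by
  refine finsum_eq_sum_of_support_subset _ (fun d hd => ?_)
  simp only [Function.mem_support, ne_eq] at hd
  have h1 : MvPowerSeries.coeff e (a ^ (d 0) * b ^ (d 1)) ≠ 0 := fun h => hd (by rw [h, mul_zero])
  have h2 : ¬ e.degree < d 0 + d 1 := fun h => h1 (coeff_pow_mul_pow_eq_zero a b ha hb _ _ e h)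
  simp only [Finset.coe_Iic, Set.mem_Iic]
  rw [Finsupp.le_def]
  intro i
  fin_cases i <;> simp <;> omega

lemma coeff_subst1 {τ : Type*} (a : MvPowerSeries τ R)
    (ha : MvPowerSeries.constantCoeff a = 0) (f : PowerSeries R) (e : τ →₀ ℕ) :
    MvPowerSeries.coeff e (subst1 a f)
      = ∑ n ∈ Finset.range (e.degree + 1),
          PowerSeries.coeff n f * MvPowerSeries.coeff e (a ^ n) := by
  refine finsum_eq_sum_of_support_subset _ (fun n hn => ?_)
  simp only [Function.mem_support, ne_eq] at hn
  have h1 : MvPowerSeries.coeff e (a ^ n) ≠ 0 := fun h => hn (by rw [h, mul_zero])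
  have h2 : ¬ e.degree < n := fun h => h1 (coeff_pow_eq_zero a ha n e h)
  simp only [Finset.coe_range, Set.mem_Iio]
  omega


lemma coeff_subst1_X1 (χ : PowerSeries R) (e : Fin 2 →₀ ℕ) :
    MvPowerSeries.coeff e (subst1 (MvPowerSeries.X 1) χ)
      = if e 0 = 0 then PowerSeries.coeff (e 1) χ else 0 := by
  have : MvPowerSeries.coeff e (subst1 (MvPowerSeries.X 1) χ)
      = ∑ᶠ n : ℕ, PowerSeries.coeff n χ
          * MvPowerSeries.coeff e ((MvPowerSeries.X 1 : MvPowerSeries (Fin 2) R) ^ n) := rfl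
  rw [this, finsum_eq_single _ (e 1) (fun n hn => ?_)]
  · rw [coeff_X_pow]
    by_cases h : e 0 = 0
    · rw [if_pos, if_pos h, mul_one]
      conv_lhs => rw [eq_fs e, h, fs_zero_left]
    · rw [if_neg, if_neg h, mul_zero]
      intro hc
      apply h
      rw [hc]
      simp [Finsupp.single_apply]
  · rw [coeff_X_pow, if_neg, mul_zero]
    intro hc
    apply hn
    rw [hc]
    simp

lemma constantCoeff_subst1_X1 (χ : PowerSeries R) (hχ0 : PowerSeries.constantCoeff χ = 0) :
    MvPowerSeries.constantCoeff (subst1 (MvPowerSeries.X (1 : Fin 2)) χ) = 0 := by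
  rw [← coeff_zero_eq_constantCoeff_apply, coeff_subst1_X1]
  simpa using hχ0

lemma coeff_subst1_X1_pow (χ : PowerSeries R) (q : ℕ) (e : Fin 2 →₀ ℕ) :
    MvPowerSeries.coeff e ((subst1 (MvPowerSeries.X 1) χ : MvPowerSeries (Fin 2) R) ^ q)
      = if e 0 = 0 then PowerSeries.coeff (e 1) (χ ^ q) else 0 := by
  classical
  induction q generalizing e with
  | zero =>
    rw [pow_zero, pow_zero, MvPowerSeries.coeff_one, PowerSeries.coeff_one]
    by_cases h0 : e 0 = 0 <;> by_cases h1 : e 1 = 0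
    · rw [if_pos h0, if_pos h1, if_pos]
      rw [eq_fs e, h0, h1]; simp [fs]
    · rw [if_pos h0, if_neg h1, if_neg]
      intro hc; exact h1 (by rw [hc]; rfl)
    · rw [if_neg h0, if_neg]
      intro hc; exact h0 (by rw [hc]; rfl)
    · rw [if_neg h0, if_neg]
      intro hc; exact h0 (by rw [hc]; rfl)
  | succ q ih =>
    rw [pow_succ, coeff_mul]
    by_cases h0 : e 0 = 0
    · rw [if_pos h0]
      have he : e = Finsupp.single 1 (e 1) := by
        conv_lhs => rw [eq_fs e, h0, fs_zero_left]
      conv_lhs => rw [he]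
      rw [Finsupp.antidiagonal_single, Finset.sum_map, pow_succ, PowerSeries.coeff_mul]
      refine Finset.sum_congr rfl (fun p hp => ?_)
      simp only [Function.Embedding.coe_prodMap, Function.Embedding.coeFn_mk, Prod.map_apply]
      rw [ih, coeff_subst1_X1]
      simp [Finsupp.single_apply]
    · rw [if_neg h0]
      apply Finset.sum_eq_zero
      rintro ⟨d, d'⟩ hd
      rw [Finset.HasAntidiagonal.mem_antidiagonal] at hd
      have hsum : d 0 + d' 0 = e 0 := by rw [← hd]; simp
      rcases Nat.eq_zero_or_pos (d 0) with h | h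
      · have hd' : d' 0 ≠ 0 := fun hz => h0 (by rw [← hsum, h, hz])
        rw [coeff_subst1_X1, if_neg hd', mul_zero]
      · rw [ih, if_neg h.ne', zero_mul]


lemma coeff_X0pow_mul_pow (χ : PowerSeries R) (p q i j : ℕ) :
    MvPowerSeries.coeff (fs i j)
      ((MvPowerSeries.X 0 : MvPowerSeries (Fin 2) R) ^ p * (subst1 (MvPowerSeries.X 1) χ) ^ q)
      = if p = i then PowerSeries.coeff j (χ ^ q) else 0 := by
  classical
  rw [coeff_X_pow_mul, coeff_subst1_X1_pow]
  have h0 : ((fs i j - Finsupp.single (0 : Fin 2) p : Fin 2 →₀ ℕ)) 0 = i - p := by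
    rw [Finsupp.tsub_apply]; simp
  have h1 : ((fs i j - Finsupp.single (0 : Fin 2) p : Fin 2 →₀ ℕ)) 1 = j := by
    rw [Finsupp.tsub_apply]; simp
  have hle : (Finsupp.single (0 : Fin 2) p ≤ fs i j) ↔ p ≤ i := by
    rw [Finsupp.single_le_iff, fs_apply0]
  rw [h0, h1]
  by_cases hpi : p = i
  · subst hpi
    rw [if_pos (hle.mpr le_rfl), if_pos (Nat.sub_self p), if_pos rfl]
  · rw [if_neg hpi]
    rcases le_or_gt p i with hp | hp
    · rw [if_pos (hle.mpr hp), if_neg (by omega)]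
    · rw [if_neg (by rw [hle]; omega)]

lemma coeff_G (F : MvPowerSeries (Fin 2) R) (χ : PowerSeries R)
    (hχ0 : PowerSeries.constantCoeff χ = 0) (i j : ℕ) :
    MvPowerSeries.coeff (fs i j)
        (subst2 (MvPowerSeries.X 0) (subst1 (MvPowerSeries.X 1) χ) F)
      = ∑ d ∈ Finset.Iic (fs (i + j) (i + j)),
          (if d 0 = i then MvPowerSeries.coeff d F * PowerSeries.coeff j (χ ^ (d 1))
           else 0) := by
  rw [coeff_subst2 _ _ (MvPowerSeries.constantCoeff_X (0 : Fin 2)) (constantCoeff_subst1_X1 χ hχ0)]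
  rw [degree_fs]
  refine Finset.sum_congr rfl (fun d _ => ?_)
  rw [coeff_X0pow_mul_pow]
  by_cases h : d 0 = i
  · rw [if_pos h, if_pos h]
  · rw [if_neg h, if_neg h, mul_zero]

lemma diag_vanish (F : MvPowerSeries (Fin 2) R) (χ : PowerSeries R)
    (hχ0 : PowerSeries.constantCoeff χ = 0)
    (hχ : subst2 PowerSeries.X χ F = 0) (n : ℕ) :
    ∑ i ∈ Finset.range (n + 1),
      MvPowerSeries.coeff (fs i (n - i))
        (subst2 (MvPowerSeries.X 0) (subst1 (MvPowerSeries.X 1) χ) F) = 0 := by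
  classical
  have key : ∀ i ∈ Finset.range (n + 1),
      MvPowerSeries.coeff (fs i (n - i))
          (subst2 (MvPowerSeries.X 0) (subst1 (MvPowerSeries.X 1) χ) F)
        = ∑ d ∈ Finset.Iic (fs n n),
            (if d 0 = i then
              MvPowerSeries.coeff d F * PowerSeries.coeff (n - i) (χ ^ (d 1)) else 0) := by
    intro i hi
    rw [Finset.mem_range] at hi
    rw [coeff_G F χ hχ0, show i + (n - i) = n by omega]
  rw [Finset.sum_congr rfl key, Finset.sum_comm]
  have hrhs : ∀ d ∈ Finset.Iic (fs n n),
      (∑ i ∈ Finset.range (n + 1),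
        if d 0 = i then MvPowerSeries.coeff d F * PowerSeries.coeff (n - i) (χ ^ (d 1))
        else 0)
      = MvPowerSeries.coeff d F
          * MvPowerSeries.coeff (Finsupp.single () n) (PowerSeries.X ^ (d 0) * χ ^ (d 1)) := by
    intro d hd
    rw [Finset.mem_Iic, Finsupp.le_def] at hd
    have hd0 : d 0 ≤ n := by simpa using hd 0
    rw [Finset.sum_ite_eq (Finset.range (n + 1)) (d 0)
      (fun i => MvPowerSeries.coeff d F * PowerSeries.coeff (n - i) (χ ^ (d 1))),
      if_pos (Finset.mem_range.mpr (by omega))]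
    have : MvPowerSeries.coeff (Finsupp.single () n) (PowerSeries.X ^ (d 0) * χ ^ (d 1))
        = PowerSeries.coeff n (PowerSeries.X ^ (d 0) * χ ^ (d 1)) := rfl
    rw [this, PowerSeries.coeff_X_pow_mul', if_pos hd0]
  rw [Finset.sum_congr rfl hrhs]
  have h0 : MvPowerSeries.coeff (Finsupp.single () n) (subst2 PowerSeries.X χ F) = 0 := by
    rw [hχ]; simp
  rw [coeff_subst2 PowerSeries.X χ PowerSeries.constantCoeff_X hχ0 F (Finsupp.single () n)] at h0
  rw [degree_single] at h0
  exact h0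


lemma coeff_X0_mul (Q : MvPowerSeries (Fin 2) R) (i j : ℕ) :
    MvPowerSeries.coeff (fs i j) ((MvPowerSeries.X 0 : MvPowerSeries (Fin 2) R) * Q)
      = if 1 ≤ i then MvPowerSeries.coeff (fs (i - 1) j) Q else 0 := by
  classical
  rw [← pow_one (MvPowerSeries.X 0 : MvPowerSeries (Fin 2) R), coeff_X_pow_mul]
  have hle : (Finsupp.single (0 : Fin 2) 1 ≤ fs i j) ↔ 1 ≤ i := by
    rw [Finsupp.single_le_iff, fs_apply0]
  have heq : (fs i j - Finsupp.single (0 : Fin 2) 1 : Fin 2 →₀ ℕ) = fs (i - 1) j := by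
    ext a
    fin_cases a <;> rw [Finsupp.tsub_apply] <;> simp
  rw [heq]
  by_cases h : 1 ≤ i
  · rw [if_pos (hle.mpr h), if_pos h]
  · rw [if_neg (fun hc => h (hle.mp hc)), if_neg h]

lemma coeff_X1_mul (Q : MvPowerSeries (Fin 2) R) (i j : ℕ) :
    MvPowerSeries.coeff (fs i j) ((MvPowerSeries.X 1 : MvPowerSeries (Fin 2) R) * Q)
      = if 1 ≤ j then MvPowerSeries.coeff (fs i (j - 1)) Q else 0 := by
  classical
  rw [← pow_one (MvPowerSeries.X 1 : MvPowerSeries (Fin 2) R), coeff_X_pow_mul]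
  have hle : (Finsupp.single (1 : Fin 2) 1 ≤ fs i j) ↔ 1 ≤ j := by
    rw [Finsupp.single_le_iff, fs_apply1]
  have heq : (fs i j - Finsupp.single (1 : Fin 2) 1 : Fin 2 →₀ ℕ) = fs i (j - 1) := by
    ext a
    fin_cases a <;> rw [Finsupp.tsub_apply] <;> simp
  rw [heq]
  by_cases h : 1 ≤ j
  · rw [if_pos (hle.mpr h), if_pos h]
  · rw [if_neg (fun hc => h (hle.mp hc)), if_neg h]

lemma coeff_sub_mul (Q : MvPowerSeries (Fin 2) R) (i j : ℕ) :
    MvPowerSeries.coeff (fs i j)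
        ((MvPowerSeries.X 0 - MvPowerSeries.X 1 : MvPowerSeries (Fin 2) R) * Q)
      = (if 1 ≤ i then MvPowerSeries.coeff (fs (i - 1) j) Q else 0)
        - (if 1 ≤ j then MvPowerSeries.coeff (fs i (j - 1)) Q else 0) := by
  rw [sub_mul, map_sub, coeff_X0_mul, coeff_X1_mul]

lemma cancel_sub (D : MvPowerSeries (Fin 2) R)
    (h : (MvPowerSeries.X 0 - MvPowerSeries.X 1 : MvPowerSeries (Fin 2) R) * D = 0) :
    D = 0 := by
  have hco : ∀ i j : ℕ,
      (if 1 ≤ i then MvPowerSeries.coeff (fs (i - 1) j) D else 0)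
        = (if 1 ≤ j then MvPowerSeries.coeff (fs i (j - 1)) D else 0) := by
    intro i j
    have h2 := congrArg (MvPowerSeries.coeff (fs i j)) h
    rw [coeff_sub_mul, map_zero] at h2
    exact sub_eq_zero.mp h2
  have h0 : ∀ j : ℕ, MvPowerSeries.coeff (fs 0 j) D = 0 := by
    intro j
    have h2 := hco 0 (j + 1)
    rw [if_neg (by omega), if_pos (by omega), Nat.add_sub_cancel] at h2
    exact h2.symm
  have hstep : ∀ i j : ℕ,
      MvPowerSeries.coeff (fs (i + 1) j) D = MvPowerSeries.coeff (fs i (j + 1)) D := by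
    intro i j
    have h2 := hco (i + 1) (j + 1)
    rw [if_pos (by omega), if_pos (by omega), Nat.add_sub_cancel, Nat.add_sub_cancel] at h2
    exact h2.symm
  have hall : ∀ i j : ℕ,
      MvPowerSeries.coeff (fs i j) D = MvPowerSeries.coeff (fs 0 (i + j)) D := by
    intro i
    induction i with
    | zero => intro j; rw [Nat.zero_add]
    | succ i ih =>
      intro j
      rw [hstep i j, ih (j + 1), show i + (j + 1) = i + 1 + j by omega]
  ext e
  rw [eq_fs e, hall, h0, map_zero]

lemma div_unique (H : MvPowerSeries (Fin 2) R)
    (hd : ∀ n : ℕ, ∑ i ∈ Finset.range (n + 1), MvPowerSeries.coeff (fs i (n - i)) H = 0) :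
    ∃! P : MvPowerSeries (Fin 2) R,
      H = (MvPowerSeries.X 0 - MvPowerSeries.X 1) * P := by
  set P : MvPowerSeries (Fin 2) R :=
    fun e => ∑ k ∈ Finset.range (e 1 + 1),
      MvPowerSeries.coeff (fs (e 0 + 1 + k) (e 1 - k)) H with hPdef
  have hP : ∀ i j : ℕ, MvPowerSeries.coeff (fs i j) P
      = ∑ k ∈ Finset.range (j + 1), MvPowerSeries.coeff (fs (i + 1 + k) (j - k)) H := by
    intro i j
    have : MvPowerSeries.coeff (fs i j) P = P (fs i j) := rfl
    rw [this, hPdef]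
    simp only [fs_apply0, fs_apply1]
  have hex : H = (MvPowerSeries.X 0 - MvPowerSeries.X 1) * P := by
    symm
    ext e
    rw [eq_fs e]
    generalize e 0 = i
    generalize e 1 = j
    rw [coeff_sub_mul]
    match i, j with
    | 0, 0 =>
      have h2 := hd 0
      rw [Finset.sum_range_one] at h2
      simpa using h2.symm
    | 0, (j' + 1) =>
      rw [if_neg (by omega), if_pos (by omega), Nat.add_sub_cancel, hP 0 j', zero_sub]
      have h2 := hd (j' + 1)
      rw [Finset.sum_range_succ'] at h2
      have e1 : ∀ k : ℕ, fs (k + 1) (j' + 1 - (k + 1)) = fs (0 + 1 + k) (j' - k) := by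
        intro k
        rw [show j' + 1 - (k + 1) = j' - k by omega, show k + 1 = 0 + 1 + k by omega]
      simp only [e1, Nat.sub_zero] at h2
      linear_combination -h2
    | (i' + 1), 0 =>
      rw [if_pos (by omega), if_neg (by omega), Nat.add_sub_cancel, hP i' 0,
        Finset.sum_range_one, sub_zero]
    | (i' + 1), (j' + 1) =>
      rw [if_pos (by omega), if_pos (by omega), Nat.add_sub_cancel, Nat.add_sub_cancel,
        hP i' (j' + 1), hP (i' + 1) j', Finset.sum_range_succ']
      have e1 : ∀ k : ℕ, fs (i' + 1 + (k + 1)) (j' + 1 - (k + 1)) = fs (i' + 1 + 1 + k) (j' - k) := by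
        intro k
        rw [show i' + 1 + (k + 1) = i' + 1 + 1 + k by omega,
          show j' + 1 - (k + 1) = j' - k by omega]
      simp only [e1, Nat.sub_zero, Nat.add_zero]
      ring
  refine ⟨P, hex, ?_⟩
  intro Q hQ
  have h2 : (MvPowerSeries.X 0 - MvPowerSeries.X 1 : MvPowerSeries (Fin 2) R) * (Q - P) = 0 := by
    rw [mul_sub, ← hQ, ← hex, sub_self]
  have h3 := cancel_sub _ h2
  rwa [sub_eq_zero] at h3

end Stmt4Aux

/-- There is a unique `P(u,v) ∈ R⟦u,v⟧` with `F(u, χ(v)) = (u - v) · P(u,v)`, where `χ` is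
the formal inverse of the formal group law `F`. -/
theorem stmt_4 {R : Type*} [CommRing R] (F : MvPowerSeries (Fin 2) R)
    (hF : IsFormalGroupLaw F) (χ : PowerSeries R)
    (hχ0 : PowerSeries.constantCoeff χ = 0)
    (hχ : subst2 PowerSeries.X χ F = 0) :
    ∃! P : MvPowerSeries (Fin 2) R,
      subst2 (MvPowerSeries.X 0) (subst1 (MvPowerSeries.X 1) χ) F
        = (MvPowerSeries.X 0 - MvPowerSeries.X 1) * P :=
  Stmt4Aux.div_unique _ (Stmt4Aux.diag_vanish F χ hχ0 hχ)
end

section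
/- Fix an integer r ≥ 1, a commutative ring R, and an index j with 1 ≤ j ≤ r. Let g : ℤ^r → R be a formal Laurent series with supp g ⊆ C and such that every s ∈ supp g has j-th coordinate s_j ≥ 1. Then the family of convolution powers (g^{*m})_{m ≥ 0} is pointwise summable (for each s ∈ ℤ^r only finitely many m have s ∈ supp(g^{*m})), the sum h = ∑_{m≥0} g^{*m} belongs to 𝓛, and (δ_0 − g) * h = δ_0; in particular δ_0 − g is a unit of the convolution ring 𝓛. -/
/-- The cone `C = {s ∈ ℤ^r : s₁ ≥ 0, s₁+s₂ ≥ 0, …, s₁+⋯+s_r ≥ 0}`. -/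
def laurentCone (r : ℕ) : Set (Fin r → ℤ) :=
  {s | ∀ j : Fin r, 0 ≤ ∑ i ∈ Finset.Iic j, s i}

/-- A formal Laurent series `f : ℤ^r → R` belongs to `𝓛` if some translate of its
support lies in the cone `C`. -/
def memL {r : ℕ} {R : Type*} [CommRing R] (f : (Fin r → ℤ) → R) : Prop :=
  ∃ n : Fin r → ℤ, ∀ s, f s ≠ 0 → n + s ∈ laurentCone r

/-- The convolution product of formal Laurent series. -/
noncomputable def conv {r : ℕ} {R : Type*} [CommRing R]
    (f g : (Fin r → ℤ) → R) : (Fin r → ℤ) → R :=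
  fun s => ∑ᶠ x : Fin r → ℤ, f x * g (s - x)

/-- The delta function at `0 ∈ ℤ^r`, the unit for convolution. -/
def deltaZero {r : ℕ} {R : Type*} [CommRing R] : (Fin r → ℤ) → R :=
  fun s => if s = 0 then 1 else 0

/-- Convolution powers `g^{*m}`. -/
noncomputable def convPow {r : ℕ} {R : Type*} [CommRing R]
    (g : (Fin r → ℤ) → R) : ℕ → ((Fin r → ℤ) → R)
  | 0 => deltaZero
  | m + 1 => conv g (convPow g m)

/-- The partial-sum map is injective. -/
lemma psum_injective (r : ℕ) :
    Function.Injective (fun (x : Fin r → ℤ) (k : Fin r) => ∑ i ∈ Finset.Iic k, x i) := by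
  intro x y hxy
  have key : ∀ n : ℕ, ∀ k : Fin r, (k : ℕ) < n → x k = y k := by
    intro n
    induction n with
    | zero => intro k hk; omega
    | succ n ih =>
      intro k hk
      have h1 : ∑ i ∈ Finset.Iic k, x i = ∑ i ∈ Finset.Iic k, y i := congrFun hxy k
      have h2 : ∑ i ∈ Finset.Iio k, x i = ∑ i ∈ Finset.Iio k, y i := by
        apply Finset.sum_congr rfl
        intro i hi
        have hik : i < k := Finset.mem_Iio.mp hi
        have : (i : ℕ) < (k : ℕ) := hik
        exact ih i (by omega)
      have hk' : k ∉ Finset.Iio k := by simp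
      rw [← Finset.Iio_insert, Finset.sum_insert hk', Finset.sum_insert hk'] at h1
      linarith
  funext k
  exact key (k + 1) k (Nat.lt_succ_self _)

/-- For a fixed `s`, only finitely many `x` satisfy `x ∈ C` and `s - x ∈ C`. -/
lemma pairs_finite (r : ℕ) (s : Fin r → ℤ) :
    {x : Fin r → ℤ | x ∈ laurentCone r ∧ s - x ∈ laurentCone r}.Finite := by
  set φ := fun (x : Fin r → ℤ) (k : Fin r) => ∑ i ∈ Finset.Iic k, x i with hφ
  have himg : φ '' {x : Fin r → ℤ | x ∈ laurentCone r ∧ s - x ∈ laurentCone r} ⊆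
      Set.pi Set.univ (fun k => Set.Icc 0 (∑ i ∈ Finset.Iic k, s i)) := by
    rintro _ ⟨x, ⟨hx, hsx⟩, rfl⟩ k _
    refine ⟨hx k, ?_⟩
    have := hsx k
    simp only [Pi.sub_apply, Finset.sum_sub_distrib] at this
    simp only [hφ]
    linarith
  have hfin : (Set.pi Set.univ (fun k => Set.Icc 0 (∑ i ∈ Finset.Iic k, s i)) :
      Set (Fin r → ℤ)).Finite := Set.Finite.pi (fun k => Set.finite_Icc _ _)
  exact Set.Finite.of_finite_image (hfin.subset himg) ((psum_injective r).injOn)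

/-- The cone is closed under addition (stated for `x` and `s - x`). -/
lemma cone_add {r : ℕ} {x s : Fin r → ℤ} (hx : x ∈ laurentCone r)
    (hsx : s - x ∈ laurentCone r) : s ∈ laurentCone r := by
  intro k
  have h1 := hx k
  have h2 := hsx k
  simp only [Pi.sub_apply, Finset.sum_sub_distrib] at h2
  linarith

/-- A nonzero finsum has a nonzero term. -/
lemma exists_ne_zero_of_finsum_ne_zero {α : Type*} {R : Type*} [CommRing R]
    {f : α → R} (h : (∑ᶠ x, f x) ≠ 0) : ∃ x, f x ≠ 0 := by
  by_contra hc
  push_neg at hc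
  exact h (finsum_eq_zero_of_forall_eq_zero hc)

/-- Support control for the convolution powers. -/
lemma convPow_support {r : ℕ} {R : Type*} [CommRing R] {j : Fin r}
    {g : (Fin r → ℤ) → R}
    (hgC : ∀ s, g s ≠ 0 → s ∈ laurentCone r)
    (hgj : ∀ s, g s ≠ 0 → 1 ≤ s j) :
    ∀ m (s : Fin r → ℤ), convPow g m s ≠ 0 → s ∈ laurentCone r ∧ (m : ℤ) ≤ s j := by
  intro m
  induction m with
  | zero =>
    intro s hs
    have : s = 0 := by
      by_contra hne
      exact hs (by simp [convPow, deltaZero, hne])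
    subst this
    exact ⟨fun k => by simp, by simp⟩
  | succ m ih =>
    intro s hs
    obtain ⟨x, hx⟩ := exists_ne_zero_of_finsum_ne_zero hs
    have hgx : g x ≠ 0 := left_ne_zero_of_mul hx
    have hpx : convPow g m (s - x) ≠ 0 := right_ne_zero_of_mul hx
    obtain ⟨hsxC, hsxj⟩ := ih (s - x) hpx
    have hxC := hgC x hgx
    have hxj := hgj x hgx
    refine ⟨cone_add hxC hsxC, ?_⟩
    have : (s - x) j = s j - x j := rfl
    push_cast
    omega

/-- If `supp g ⊆ C` and every `s ∈ supp g` has `s j ≥ 1`, then the family of convolution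
powers of `g` is pointwise summable, its sum `h = ∑_{m≥0} g^{*m}` lies in `𝓛`, and
`(δ₀ - g) * h = δ₀`; in particular `δ₀ - g` is a unit of the convolution ring `𝓛`. -/
theorem stmt_11 (r : ℕ) (hr : 1 ≤ r) (R : Type*) [CommRing R] (j : Fin r)
    (g : (Fin r → ℤ) → R)
    (hgC : ∀ s, g s ≠ 0 → s ∈ laurentCone r)
    (hgj : ∀ s, g s ≠ 0 → 1 ≤ s j) :
    (∀ s : Fin r → ℤ, {m : ℕ | convPow g m s ≠ 0}.Finite) ∧
    memL (fun s => ∑ᶠ m : ℕ, convPow g m s) ∧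
    conv (deltaZero - g) (fun s => ∑ᶠ m : ℕ, convPow g m s) = deltaZero ∧
    (∃ h : (Fin r → ℤ) → R, memL h ∧
      conv (deltaZero - g) h = deltaZero ∧ conv h (deltaZero - g) = deltaZero) := by
  have hsupp := convPow_support hgC hgj
  set h : (Fin r → ℤ) → R := fun s => ∑ᶠ m : ℕ, convPow g m s with hh
  -- pointwise summability
  have hfin : ∀ s : Fin r → ℤ, {m : ℕ | convPow g m s ≠ 0}.Finite := by
    intro s
    apply (Set.finite_Iic (s j).toNat).subset
    intro m hm
    have := (hsupp m s hm).2
    simp only [Set.mem_Iic]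
    omega
  -- support of h lies in the cone
  have hhC : ∀ s, h s ≠ 0 → s ∈ laurentCone r := by
    intro s hs
    obtain ⟨m, hm⟩ := exists_ne_zero_of_finsum_ne_zero hs
    exact (hsupp m s hm).1
  have hmemL : memL h := ⟨0, fun s hs => by simpa using hhC s hs⟩
  -- main computation at a point s
  have key : ∀ s : Fin r → ℤ, conv (deltaZero - g) h s = deltaZero s := by
    intro s
    set A : Finset (Fin r → ℤ) := (pairs_finite r s).toFinset with hA
    set N : ℕ := (s j).toNat with hN
    -- support of x ↦ g x * (anything supported in C at s - x) lies in A
    have hmemA : ∀ x : Fin r → ℤ, g x ≠ 0 → s - x ∈ laurentCone r → x ∈ A := by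
      intro x hgx hsx
      simp only [hA, Set.Finite.mem_toFinset, Set.mem_setOf_eq]
      exact ⟨hgC x hgx, hsx⟩
    -- conv g h s = ∑_{m < N} convPow g (m+1) s
    have hterm : ∀ x : Fin r → ℤ,
        g x * h (s - x) = ∑ m ∈ Finset.range N, g x * convPow g m (s - x) := by
      intro x
      rw [hh]
      rw [mul_finsum' _ _ (hfin (s - x))]
      apply finsum_eq_finset_sum_of_support_subset
      intro m hm
      simp only [Function.mem_support] at hm
      have hgx : g x ≠ 0 := left_ne_zero_of_mul hm
      have hpx : convPow g m (s - x) ≠ 0 := right_ne_zero_of_mul hm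
      have h1 := (hsupp m (s - x) hpx).2
      have h2 := hgj x hgx
      have h3 : (s - x) j = s j - x j := rfl
      simp only [Finset.coe_range, Set.mem_Iio]
      omega
    have hgh : conv g h s = ∑ m ∈ Finset.range N, convPow g (m + 1) s := by
      have step1 : conv g h s = ∑ x ∈ A, g x * h (s - x) := by
        apply finsum_eq_finset_sum_of_support_subset
        intro x hx
        simp only [Function.mem_support] at hx
        have hgx : g x ≠ 0 := left_ne_zero_of_mul hx
        have hhx : h (s - x) ≠ 0 := right_ne_zero_of_mul hx
        exact hmemA x hgx (hhC _ hhx)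
      rw [step1]
      calc ∑ x ∈ A, g x * h (s - x)
          = ∑ x ∈ A, ∑ m ∈ Finset.range N, g x * convPow g m (s - x) := by
            exact Finset.sum_congr rfl fun x _ => hterm x
        _ = ∑ m ∈ Finset.range N, ∑ x ∈ A, g x * convPow g m (s - x) :=
            Finset.sum_comm
        _ = ∑ m ∈ Finset.range N, convPow g (m + 1) s := by
            apply Finset.sum_congr rfl
            intro m _
            show _ = conv g (convPow g m) s
            symm
            apply finsum_eq_finset_sum_of_support_subset
            intro x hx
            simp only [Function.mem_support] at hx
            have hgx : g x ≠ 0 := left_ne_zero_of_mul hx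
            have hpx : convPow g m (s - x) ≠ 0 := right_ne_zero_of_mul hx
            exact hmemA x hgx (hsupp m (s - x) hpx).1
    -- h s = convPow g 0 s + ∑_{m < N} convPow g (m+1) s
    have hhs : h s = deltaZero s + ∑ m ∈ Finset.range N, convPow g (m + 1) s := by
      have : h s = ∑ m ∈ Finset.range (N + 1), convPow g m s := by
        apply finsum_eq_finset_sum_of_support_subset
        intro m hm
        simp only [Function.mem_support] at hm
        have := (hsupp m s hm).2
        simp only [Finset.coe_range, Set.mem_Iio]
        omega
      rw [this, Finset.sum_range_succ']
      show _ = convPow g 0 s + _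
      ring
    -- split the convolution
    have hsplit : conv (deltaZero - g) h s = conv deltaZero h s - conv g h s := by
      have expand : conv (deltaZero - g) h s
          = ∑ᶠ x, ((deltaZero : (Fin r → ℤ) → R) x - g x) * h (s - x) := rfl
      rw [expand]
      have heq : ∀ x : Fin r → ℤ, ((deltaZero : (Fin r → ℤ) → R) x - g x) * h (s - x)
          = deltaZero x * h (s - x) - g x * h (s - x) := by
        intro x; ring
      rw [finsum_congr heq]
      apply finsum_sub_distrib
      · apply Set.Finite.subset (Set.finite_singleton (0 : Fin r → ℤ))
        intro x hx
        simp only [Function.mem_support] at hx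
        have : deltaZero (R := R) x ≠ 0 := left_ne_zero_of_mul hx
        simp only [Set.mem_singleton_iff]
        by_contra hne
        exact this (if_neg hne)
      · apply Set.Finite.subset (pairs_finite r s)
        intro x hx
        simp only [Function.mem_support] at hx
        have hgx : g x ≠ 0 := left_ne_zero_of_mul hx
        have hhx : h (s - x) ≠ 0 := right_ne_zero_of_mul hx
        exact ⟨hgC x hgx, hhC _ hhx⟩
    have hdelta : conv deltaZero h s = h s := by
      show (∑ᶠ x, deltaZero x * h (s - x)) = h s
      rw [finsum_eq_single _ (0 : Fin r → ℤ)]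
      · simp [deltaZero]
      · intro x hx
        simp [deltaZero, hx]
    rw [hsplit, hdelta, hgh, hhs]
    ring
  have hmain : conv (deltaZero - g) h = deltaZero := funext key
  -- commutativity of convolution
  have hcomm : ∀ f₁ f₂ : (Fin r → ℤ) → R, conv f₁ f₂ = conv f₂ f₁ := by
    intro f₁ f₂
    funext s
    show (∑ᶠ x, f₁ x * f₂ (s - x)) = ∑ᶠ x, f₂ x * f₁ (s - x)
    rw [← finsum_comp_equiv (Equiv.subLeft s) (f := fun x => f₂ x * f₁ (s - x))]
    apply finsum_congr
    intro x
    simp [Equiv.subLeft, mul_comm, sub_sub_cancel]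
  exact ⟨hfin, hmemL, hmain, h, hmemL, hmain, by rw [hcomm, hmain]⟩
end

section
/- Fix an integer k ≥ 0. The map sending a k-Grassmannian element w ∈ W_∞ to the sequence λ(w) defined by λ_i := k − w(k+i) if w(k+i) < 0 and λ_i := #{j : 1 ≤ j ≤ k and w(j) > w(k+i)} if w(k+i) > 0, is a bijection from the set W_∞^{(k)} of all k-Grassmannian elements of W_∞ onto the set 𝒮𝒫^k of all k-strict partitions. -/
/-- `w` is a signed permutation (an element of `W_∞`): a permutation of `ℤ` (fixing `0`,
which is forced) with `w(-i) = -w(i)` for all `i` and `w(i) ≠ i` for only finitely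
many `i`. -/
def IsSignedPerm (w : Equiv.Perm ℤ) : Prop :=
  (∀ i : ℤ, w (-i) = -w i) ∧ {i : ℤ | w i ≠ i}.Finite

/-- `w` is `k`-Grassmannian: `0 < w(1) < ⋯ < w(k)` and `w(k+1) < w(k+2) < ⋯`. -/
def IsKGrassmannian (k : ℕ) (w : Equiv.Perm ℤ) : Prop :=
  (∀ j : ℕ, 1 ≤ j → j ≤ k → 0 < w (j : ℤ)) ∧
  (∀ j : ℕ, 1 ≤ j → j + 1 ≤ k → w (j : ℤ) < w ((j : ℤ) + 1)) ∧
  (∀ i : ℕ, 1 ≤ i → w ((k : ℤ) + (i : ℤ)) < w ((k : ℤ) + (i : ℤ) + 1))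

/-- The sequence `λ` attached to a `k`-Grassmannian signed permutation `w`:
`λ_i = k - w(k+i)` if `w(k+i) < 0`, and `λ_i = #{j : 1 ≤ j ≤ k, w(j) > w(k+i)}`
if `w(k+i) > 0`. -/
def lamOf (k : ℕ) (w : Equiv.Perm ℤ) (i : ℕ) : ℤ :=
  if w ((k : ℤ) + (i : ℤ)) < 0 then (k : ℤ) - w ((k : ℤ) + (i : ℤ))
  else (((Finset.Icc 1 k)).filter fun j : ℕ => w ((k : ℤ) + (i : ℤ)) < w (j : ℤ)).card

/-- The set of `k`-strict partitions, encoded as sequences `μ : ℕ → ℤ` where `μ i` is the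
`(i+1)`-st part: nonnegative, weakly decreasing, finitely many nonzero terms, and
`μ i > k` implies `μ i > μ (i+1)`. -/
def kStrictPartitions (k : ℕ) : Set (ℕ → ℤ) :=
  {μ | (∀ i : ℕ, 0 ≤ μ i) ∧ (∀ i : ℕ, μ (i + 1) ≤ μ i) ∧
    {i : ℕ | μ i ≠ 0}.Finite ∧ (∀ i : ℕ, (k : ℤ) < μ i → μ (i + 1) < μ i)}

open Finset

namespace Stmt13

/-! ### Partition-side constructions -/

noncomputable def Bnd (μ : ℕ → ℤ) : ℕ := sSup {i | μ i ≠ 0} + 1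

noncomputable def mI (k : ℕ) (μ : ℕ → ℤ) : ℕ := sInf {n | μ n ≤ (k : ℤ)}

variable {k : ℕ} {μ : ℕ → ℤ}

lemma muanti (hμ : μ ∈ kStrictPartitions k) : Antitone μ :=
  antitone_nat_of_succ_le fun n => hμ.2.1 n

lemma Bnd_spec (hμ : μ ∈ kStrictPartitions k) : ∀ i, Bnd μ ≤ i → μ i = 0 := by
  intro i hi
  by_contra h
  have hmem : i ∈ {i | μ i ≠ 0} := h
  have := le_csSup (hμ.2.2.1.bddAbove) hmem
  simp only [Bnd] at hi; omega

lemma mI_spec (hμ : μ ∈ kStrictPartitions k) : ∀ i, (k : ℤ) < μ i ↔ i < mI k μ := by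
  have hne : {n | μ n ≤ (k : ℤ)}.Nonempty :=
    ⟨Bnd μ, by simp only [Set.mem_setOf_eq, Bnd_spec hμ (Bnd μ) le_rfl]; positivity⟩
  intro i
  constructor
  · intro h
    by_contra hh
    push_neg at hh
    have h1 : μ (mI k μ) ≤ (k : ℤ) := Nat.sInf_mem hne
    have h2 := (muanti hμ) hh
    omega
  · intro h
    have := Nat.notMem_of_lt_sInf (s := {n | μ n ≤ (k:ℤ)}) h
    simp only [Set.mem_setOf_eq, not_le] at this
    exact this


lemma mu_strict_at (hμ : μ ∈ kStrictPartitions k) {i : ℕ} (hi : i < mI k μ) :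
    μ (i + 1) < μ i :=
  hμ.2.2.2 i ((mI_spec hμ i).2 hi)

lemma mu_lt_of_lt (hμ : μ ∈ kStrictPartitions k) {i j : ℕ} (hij : i < j) (hi : i < mI k μ) :
    μ j < μ i :=
  lt_of_le_of_lt (muanti hμ hij) (mu_strict_at hμ hi)

noncomputable def Dset (k : ℕ) (μ : ℕ → ℤ) : Finset ℕ :=
  (Finset.range (mI k μ)).image fun i => (μ i - k).toNat

lemma mem_Dset (hμ : μ ∈ kStrictPartitions k) {x : ℕ} :
    x ∈ Dset k μ ↔ ∃ i < mI k μ, (x : ℤ) = μ i - k := by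
  simp only [Dset, mem_image, mem_range]
  constructor
  · rintro ⟨i, hi, rfl⟩
    exact ⟨i, hi, by
      have : (k:ℤ) < μ i := (mI_spec hμ i).2 hi
      omega⟩
  · rintro ⟨i, hi, hx⟩
    exact ⟨i, hi, by omega⟩

lemma Dset_pos (hμ : μ ∈ kStrictPartitions k) {x : ℕ} (hx : x ∈ Dset k μ) : 1 ≤ x := by
  obtain ⟨i, hi, h⟩ := (mem_Dset hμ).1 hx
  have : (k:ℤ) < μ i := (mI_spec hμ i).2 hi
  omega

lemma Dset_le (hμ : μ ∈ kStrictPartitions k) {x : ℕ} (hx : x ∈ Dset k μ) :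
    x ≤ (μ 0).toNat := by
  obtain ⟨i, hi, h⟩ := (mem_Dset hμ).1 hx
  have : μ i ≤ μ 0 := muanti hμ (Nat.zero_le i)
  omega

lemma Dset_card (hμ : μ ∈ kStrictPartitions k) : (Dset k μ).card = mI k μ := by
  rw [Dset, Finset.card_image_of_injOn, Finset.card_range]
  intro a ha b hb hab
  simp only [coe_range, Set.mem_Iio] at ha hb
  simp only at hab
  by_contra hne
  rcases Nat.lt_or_ge a b with h | h
  · have h1 := mu_lt_of_lt hμ h ha
    have h2 : (k:ℤ) < μ a := (mI_spec hμ a).2 ha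
    have h3 : (k:ℤ) < μ b := (mI_spec hμ b).2 hb
    omega
  · have h' : b < a := by omega
    have h1 := mu_lt_of_lt hμ h' hb
    have h2 : (k:ℤ) < μ a := (mI_spec hμ a).2 ha
    have h3 : (k:ℤ) < μ b := (mI_spec hμ b).2 hb
    omega

def pP (k : ℕ) (μ : ℕ → ℤ) : ℕ → Prop := fun x => 1 ≤ x ∧ x ∉ Dset k μ

noncomputable instance : DecidablePred (pP k μ) := fun x =>
  Classical.dec _

lemma pP_infinite : (setOf (pP k μ)).Infinite := by
  have hfin : ({x | ¬ pP k μ x}).Finite := by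
    apply Set.Finite.subset (Set.finite_Icc 0 (max 1 ((Dset k μ).sup id)))
    intro x hx
    simp only [pP, Set.mem_setOf_eq, not_and, not_not] at hx
    rcases Nat.lt_or_ge x 1 with h | h
    · simp only [Set.mem_Icc]; omega
    · have hD := hx h
      have : x ≤ (Dset k μ).sup id := Finset.le_sup (f := id) hD
      simp only [Set.mem_Icc]; omega
  have : setOf (pP k μ) = {x | ¬ pP k μ x}ᶜ := by ext x; simp; exact Iff.rfl
  rw [this]
  exact Set.Finite.infinite_compl hfin

noncomputable def eE (k : ℕ) (μ : ℕ → ℤ) : ℕ → ℕ := Nat.nth (pP k μ)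

lemma eE_strictMono : StrictMono (eE k μ) := Nat.nth_strictMono pP_infinite

lemma pP_eE (r : ℕ) : pP k μ (eE k μ r) := Nat.nth_mem_of_infinite pP_infinite r

lemma count_eE (r : ℕ) : Nat.count (pP k μ) (eE k μ r) = r :=
  Nat.count_nth_of_infinite pP_infinite r

lemma eE_count {x : ℕ} (hx : pP k μ x) : eE k μ (Nat.count (pP k μ) x) = x :=
  Nat.nth_count hx

lemma eE_pos (r : ℕ) : 1 ≤ eE k μ r := (pP_eE r).1

lemma count_large (hμ : μ ∈ kStrictPartitions k) {x : ℕ} (hx : (μ 0).toNat + 1 ≤ x) :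
    Nat.count (pP k μ) x = x - 1 - mI k μ := by
  rw [Nat.count_eq_card_filter_range]
  have hDsub : Dset k μ ⊆ Finset.Ico 1 x := by
    intro y hy
    simp only [mem_Ico]
    exact ⟨Dset_pos hμ hy, by have := Dset_le hμ hy; omega⟩
  have : {y ∈ range x | pP k μ y} = Finset.Ico 1 x \ Dset k μ := by
    ext y
    rw [mem_filter]; simp only [mem_range, pP, mem_sdiff, mem_Ico]
    tauto
  rw [this, card_sdiff_of_subset hDsub, Nat.card_Ico, Dset_card hμ]

lemma eE_large (hμ : μ ∈ kStrictPartitions k) {r : ℕ} (hr : (μ 0).toNat ≤ r) :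
    eE k μ r = r + 1 + mI k μ := by
  have hp : pP k μ (r + 1 + mI k μ) := by
    refine ⟨by omega, fun hD => ?_⟩
    have := Dset_le hμ hD
    omega
  have := eE_count hp
  rw [count_large hμ (by omega)] at this
  have h2 : r + 1 + mI k μ - 1 - mI k μ = r := by omega
  rwa [h2] at this

lemma eE_ge (r : ℕ) : r + 1 ≤ eE k μ r := by
  induction r with
  | zero => exact eE_pos 0
  | succ n ih =>
    have h := eE_strictMono (k := k) (μ := μ) (Nat.lt_succ_self n)
    simp only [Nat.succ_eq_add_one] at h ⊢
    omega

noncomputable def TT (k : ℕ) (μ : ℕ → ℤ) : ℕ → ℕ := fun n => (n - mI k μ) + (k - (μ n).toNat)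

noncomputable def CC (k : ℕ) (μ : ℕ → ℤ) : ℕ := max (mI k μ) (Bnd μ)

lemma m_le_C : mI k μ ≤ CC k μ := le_max_left _ _

lemma mu_toNat_le (hμ : μ ∈ kStrictPartitions k) {n : ℕ} (hn : mI k μ ≤ n) :
    (μ n).toNat ≤ k := by
  have h1 : ¬ ((k:ℤ) < μ n) := by rw [mI_spec hμ n]; omega
  omega

lemma TT_succ_lt (hμ : μ ∈ kStrictPartitions k) {n : ℕ} (hn : mI k μ ≤ n) :
    TT k μ n < TT k μ (n + 1) := by
  have h1 : μ (n + 1) ≤ μ n := hμ.2.1 n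
  have h2 : 0 ≤ μ (n+1) := hμ.1 (n+1)
  have h3 := mu_toNat_le hμ hn
  simp only [TT]
  omega

lemma TT_lt (hμ : μ ∈ kStrictPartitions k) {a b : ℕ} (ha : mI k μ ≤ a) (hab : a < b) :
    TT k μ a < TT k μ b := by
  induction b with
  | zero => omega
  | succ n ih =>
    rcases Nat.lt_or_ge a n with h | h
    · exact lt_trans (ih h) (TT_succ_lt hμ (by omega))
    · have : a = n := by omega
      subst this
      exact TT_succ_lt hμ ha

lemma TT_large (hμ : μ ∈ kStrictPartitions k) {n : ℕ} (hn : CC k μ ≤ n) :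
    TT k μ n = n - mI k μ + k := by
  have : μ n = 0 := Bnd_spec hμ n (le_trans (le_max_right _ _) hn)
  simp [TT, this]

noncomputable def usedF (k : ℕ) (μ : ℕ → ℤ) : Finset ℕ :=
  (Finset.Ico (mI k μ) (CC k μ)).image (TT k μ)

noncomputable def Ffin (k : ℕ) (μ : ℕ → ℤ) : Finset ℕ :=
  Finset.range (CC k μ - mI k μ + k) \ usedF k μ

lemma TT_CC (hμ : μ ∈ kStrictPartitions k) : TT k μ (CC k μ) = CC k μ - mI k μ + k :=
  TT_large hμ le_rfl

lemma usedF_subset (hμ : μ ∈ kStrictPartitions k) :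
    usedF k μ ⊆ Finset.range (CC k μ - mI k μ + k) := by
  intro x hx
  simp only [usedF, mem_image, mem_Ico] at hx
  obtain ⟨n, ⟨hn1, hn2⟩, rfl⟩ := hx
  rw [mem_range, ← TT_CC hμ]
  exact TT_lt hμ hn1 hn2

lemma usedF_card (hμ : μ ∈ kStrictPartitions k) : (usedF k μ).card = CC k μ - mI k μ := by
  rw [usedF, Finset.card_image_of_injOn, Nat.card_Ico]
  intro a ha b hb hab
  simp only [coe_Ico, Set.mem_Ico] at ha hb
  by_contra hne
  rcases Nat.lt_or_ge a b with h | h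
  · exact absurd hab (Nat.ne_of_lt (TT_lt hμ ha.1 h))
  · exact absurd hab.symm (Nat.ne_of_lt (TT_lt hμ hb.1 (by omega)))

lemma Ffin_card (hμ : μ ∈ kStrictPartitions k) : (Ffin k μ).card = k := by
  rw [Ffin, card_sdiff_of_subset (usedF_subset hμ), card_range, usedF_card hμ]
  omega

lemma TT_not_mem_Ffin (hμ : μ ∈ kStrictPartitions k) {n : ℕ} (hn : mI k μ ≤ n) :
    TT k μ n ∉ Ffin k μ := by
  rcases Nat.lt_or_ge n (CC k μ) with h | h
  · simp only [Ffin, mem_sdiff, not_and, not_not]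
    intro _
    exact mem_image_of_mem _ (mem_Ico.2 ⟨hn, h⟩)
  · simp only [Ffin, mem_sdiff, mem_range, not_and]
    intro hr
    exfalso
    have h1 : TT k μ (CC k μ) ≤ TT k μ n := by
      rcases Nat.eq_or_lt_of_le h with h' | h'
      · rw [h']
      · exact le_of_lt (TT_lt hμ m_le_C h')
    rw [TT_CC hμ] at h1
    omega

lemma not_mem_Ffin (hμ : μ ∈ kStrictPartitions k) {r : ℕ} (hr : r ∉ Ffin k μ) :
    ∃ n, mI k μ ≤ n ∧ TT k μ n = r := by
  rcases Nat.lt_or_ge r (CC k μ - mI k μ + k) with h | h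
  · have : r ∈ usedF k μ := by
      simp only [Ffin, mem_sdiff, mem_range, not_and, not_not] at hr
      exact hr h
    simp only [usedF, mem_image, mem_Ico] at this
    obtain ⟨n, ⟨hn1, _⟩, rfl⟩ := this
    exact ⟨n, hn1, rfl⟩
  · refine ⟨r - k + mI k μ, by omega, ?_⟩
    rw [TT_large hμ (by omega)]
    omega

noncomputable def hIdx (k : ℕ) (μ : ℕ → ℤ) : ℕ → ℕ := fun n =>
  if h : n < (Ffin k μ).card then (Ffin k μ).orderEmbOfFin rfl ⟨n, h⟩ else 0

lemma hIdx_mem (hμ : μ ∈ kStrictPartitions k) {n : ℕ} (hn : n < k) :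
    hIdx k μ n ∈ Ffin k μ := by
  have h : n < (Ffin k μ).card := by rw [Ffin_card hμ]; exact hn
  simp only [hIdx, dif_pos h]
  exact Finset.orderEmbOfFin_mem _ rfl _

lemma hIdx_strictMono (hμ : μ ∈ kStrictPartitions k) {a b : ℕ} (hab : a < b) (hb : b < k) :
    hIdx k μ a < hIdx k μ b := by
  have hb' : b < (Ffin k μ).card := by rw [Ffin_card hμ]; exact hb
  have ha' : a < (Ffin k μ).card := by omega
  simp only [hIdx, dif_pos ha', dif_pos hb']
  exact ((Ffin k μ).orderEmbOfFin rfl).strictMono (by exact hab)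

lemma hIdx_surj (hμ : μ ∈ kStrictPartitions k) {r : ℕ} (hr : r ∈ Ffin k μ) :
    ∃ n < k, hIdx k μ n = r := by
  have : r ∈ Set.range ((Ffin k μ).orderEmbOfFin rfl) := by
    rw [Finset.range_orderEmbOfFin]
    exact hr
  obtain ⟨⟨n, hn⟩, h⟩ := this
  refine ⟨n, by rwa [Ffin_card hμ] at hn, ?_⟩
  simp only [hIdx, dif_pos hn]
  exact h

noncomputable def gfun (k : ℕ) (μ : ℕ → ℤ) : ℕ → ℤ := fun n =>
  if n < k then (eE k μ (hIdx k μ n) : ℤ)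
  else if n - k < mI k μ then (k : ℤ) - μ (n - k)
  else (eE k μ (TT k μ (n - k)) : ℤ)

noncomputable def Wfun (k : ℕ) (μ : ℕ → ℤ) : ℤ → ℤ := fun x =>
  if 0 < x then gfun k μ (x.toNat - 1)
  else if x = 0 then 0 else - gfun k μ ((-x).toNat - 1)

lemma g_head (hn : n < k) : gfun k μ n = (eE k μ (hIdx k μ n) : ℤ) := if_pos hn

lemma g_mid (hn : k ≤ n) (hn2 : n - k < mI k μ) : gfun k μ n = (k : ℤ) - μ (n - k) := by
  rw [gfun, if_neg (by omega), if_pos hn2]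

lemma g_tail (hn : k ≤ n) (hn2 : mI k μ ≤ n - k) :
    gfun k μ n = (eE k μ (TT k μ (n - k)) : ℤ) := by
  rw [gfun, if_neg (by omega), if_neg (by omega)]

lemma g_mid_neg (hμ : μ ∈ kStrictPartitions k) (hn : k ≤ n) (hn2 : n - k < mI k μ) :
    gfun k μ n < 0 := by
  rw [g_mid hn hn2]
  have : (k:ℤ) < μ (n - k) := (mI_spec hμ (n-k)).2 hn2
  omega

lemma g_pos_cases (hn : ¬ (k ≤ n ∧ n - k < mI k μ)) : 0 < gfun k μ n := by
  rcases Nat.lt_or_ge n k with h | h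
  · rw [g_head h]
    exact_mod_cast eE_pos _
  · rw [g_tail h (by omega)]
    exact_mod_cast eE_pos _

lemma g_sign (hμ : μ ∈ kStrictPartitions k) (n : ℕ) :
    gfun k μ n < 0 ↔ (k ≤ n ∧ n - k < mI k μ) := by
  constructor
  · intro h
    by_contra hc
    have := g_pos_cases (n := n) (μ := μ) hc
    omega
  · intro ⟨h1, h2⟩
    exact g_mid_neg hμ h1 h2

lemma eE_ne_mid (hμ : μ ∈ kStrictPartitions k) {r i : ℕ} (hi : i < mI k μ) :
    (eE k μ r : ℤ) ≠ μ i - k := by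
  intro h
  have hD : eE k μ r ∈ Dset k μ := (mem_Dset hμ).2 ⟨i, hi, h⟩
  exact (pP_eE r).2 hD

lemma g_injective (hμ : μ ∈ kStrictPartitions k) : Function.Injective (gfun k μ) := by
  intro a b hab
  by_contra hne
  wlog hlt : a < b generalizing a b
  · exact this hab.symm (Ne.symm hne) (by omega)
  rcases Nat.lt_or_ge a k with ha | ha
  · rcases Nat.lt_or_ge b k with hb | hb
    · -- both heads
      rw [g_head ha, g_head hb] at hab
      have := hIdx_strictMono hμ hlt hb
      have := eE_strictMono (k := k) (μ := μ) this
      omega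
    · rcases Nat.lt_or_ge (b - k) (mI k μ) with hb2 | hb2
      · -- head vs mid: signs
        have h1 : 0 < gfun k μ a := g_pos_cases (by omega)
        have h2 := g_mid_neg hμ hb hb2
        omega
      · -- head vs tail: eE injective, indices distinct
        rw [g_head ha, g_tail hb hb2] at hab
        have : hIdx k μ a = TT k μ (b - k) := by
          exact_mod_cast eE_strictMono.injective (by exact_mod_cast hab)
        have h1 := hIdx_mem hμ ha
        have h2 := TT_not_mem_Ffin hμ hb2
        rw [this] at h1
        exact h2 h1
  · rcases Nat.lt_or_ge (a - k) (mI k μ) with ha2 | ha2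
    · rcases Nat.lt_or_ge (b - k) (mI k μ) with hb2 | hb2
      · -- both mid
        rw [g_mid ha ha2, g_mid (by omega) hb2] at hab
        have := mu_lt_of_lt hμ (show a - k < b - k by omega) ha2
        omega
      · -- mid vs tail: signs
        have h1 := g_mid_neg hμ ha ha2
        have h2 : 0 < gfun k μ b := g_pos_cases (by omega)
        omega
    · -- both tail
      rw [g_tail ha ha2, g_tail (by omega) (by omega)] at hab
      have hTT : TT k μ (a - k) < TT k μ (b - k) := TT_lt hμ ha2 (by omega)
      have := eE_strictMono (k := k) (μ := μ) hTT
      omega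

lemma g_ne_neg (hμ : μ ∈ kStrictPartitions k) (a b : ℕ) : gfun k μ a ≠ - gfun k μ b := by
  intro h
  rcases lt_trichotomy (gfun k μ a) 0 with h1 | h1 | h1
  · -- a mid, b positive: -g b = g a means g b = -g a = μ i - k... 
    obtain ⟨ha, ha2⟩ := (g_sign hμ a).1 h1
    have hb : 0 < gfun k μ b := by omega
    rw [g_mid ha ha2] at h
    -- gfun b = -(k - μ (a-k)) = μ (a-k) - k
    have hbv : gfun k μ b = μ (a - k) - (k:ℤ) := by omega
    rcases Nat.lt_or_ge b k with hbk | hbk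
    · rw [g_head hbk] at hbv
      exact eE_ne_mid hμ ha2 hbv
    · rcases Nat.lt_or_ge (b - k) (mI k μ) with hb2 | hb2
      · have := g_mid_neg hμ hbk hb2; omega
      · rw [g_tail hbk hb2] at hbv
        exact eE_ne_mid hμ ha2 hbv
  · have : 0 < gfun k μ a := g_pos_cases (fun hc => by
      have := g_mid_neg hμ hc.1 hc.2; omega)
    omega
  · -- a positive, so g b < 0, b mid
    have hb1 : gfun k μ b < 0 := by omega
    obtain ⟨hb, hb2⟩ := (g_sign hμ b).1 hb1
    rw [g_mid hb hb2] at h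
    have hav : gfun k μ a = μ (b - k) - (k:ℤ) := by omega
    rcases Nat.lt_or_ge a k with hak | hak
    · rw [g_head hak] at hav
      exact eE_ne_mid hμ hb2 hav
    · rcases Nat.lt_or_ge (a - k) (mI k μ) with ha2 | ha2
      · have := g_mid_neg hμ hak ha2; omega
      · rw [g_tail hak ha2] at hav
        exact eE_ne_mid hμ hb2 hav

lemma g_ne_zero (hμ : μ ∈ kStrictPartitions k) (n : ℕ) : gfun k μ n ≠ 0 := by
  rcases Nat.lt_or_ge n k with h | h
  · have := g_pos_cases (k := k) (n := n) (μ := μ) (by omega); omega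
  · rcases Nat.lt_or_ge (n - k) (mI k μ) with h2 | h2
    · have := g_mid_neg hμ h h2; omega
    · have := g_pos_cases (k := k) (n := n) (μ := μ) (by omega); omega

lemma g_eventual (hμ : μ ∈ kStrictPartitions k) :
    ∀ n, k + CC k μ + (μ 0).toNat + mI k μ ≤ n → gfun k μ n = (n : ℤ) + 1 := by
  intro n hn
  have h1 : k ≤ n := by omega
  have h2 : CC k μ ≤ n - k := by omega
  have h3 : mI k μ ≤ n - k := le_trans m_le_C h2
  rw [g_tail h1 h3, TT_large hμ h2]
  have h4 : n - k - mI k μ + k = n - mI k μ := by omega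
  rw [h4, eE_large hμ (by omega)]
  have h5 : n - mI k μ + 1 + mI k μ = n + 1 := by omega
  rw [h5]
  push_cast
  ring

lemma g_surj (hμ : μ ∈ kStrictPartitions k) (t : ℕ) (ht : 1 ≤ t) :
    (∃ n, gfun k μ n = (t : ℤ)) ∨ (∃ n, gfun k μ n = -(t : ℤ)) := by
  by_cases hD : t ∈ Dset k μ
  · right
    obtain ⟨i, hi, hx⟩ := (mem_Dset hμ).1 hD
    refine ⟨k + i, ?_⟩
    rw [g_mid (by omega) (by omega)]
    have : k + i - k = i := by omega
    rw [this]
    omega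
  · left
    have hp : pP k μ t := ⟨ht, hD⟩
    set r := Nat.count (pP k μ) t with hr
    have her : eE k μ r = t := eE_count hp
    by_cases hF : r ∈ Ffin k μ
    · obtain ⟨n, hn, hidx⟩ := hIdx_surj hμ hF
      exact ⟨n, by rw [g_head hn, hidx, her]⟩
    · obtain ⟨n, hn, hT⟩ := not_mem_Ffin hμ hF
      refine ⟨k + n, ?_⟩
      rw [g_tail (by omega) (by omega)]
      have : k + n - k = n := by omega
      rw [this, hT, her]

lemma W_pos {x : ℤ} (hx : 0 < x) : Wfun k μ x = gfun k μ (x.toNat - 1) := if_pos hx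

lemma W_zero : Wfun k μ 0 = 0 := by simp [Wfun]

lemma W_neg {x : ℤ} (hx : x < 0) : Wfun k μ x = - gfun k μ ((-x).toNat - 1) := by
  rw [Wfun, if_neg (by omega), if_neg (by omega)]

lemma W_odd (x : ℤ) : Wfun k μ (-x) = - Wfun k μ x := by
  rcases lt_trichotomy x 0 with h | h | h
  · rw [W_neg h, W_pos (by omega), neg_neg]
  · subst h; simp [W_zero]
  · rw [W_pos h, W_neg (by omega), neg_neg]

lemma W_bijective (hμ : μ ∈ kStrictPartitions k) : Function.Bijective (Wfun k μ) := by
  constructor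
  · intro x y h
    rcases lt_trichotomy x 0 with hx | hx | hx <;> rcases lt_trichotomy y 0 with hy | hy | hy
    · rw [W_neg hx, W_neg hy, neg_inj] at h
      have := g_injective hμ h
      omega
    · subst hy; rw [W_neg hx, W_zero, neg_eq_zero] at h
      exact absurd h (g_ne_zero hμ _)
    · rw [W_neg hx, W_pos hy] at h
      exact absurd h.symm (g_ne_neg hμ _ _)
    · subst hx; rw [W_zero, W_neg hy] at h
      exact absurd h.symm (neg_ne_zero.2 (g_ne_zero hμ _))
    · omega
    · subst hx; rw [W_zero, W_pos hy] at h
      exact absurd h.symm (g_ne_zero hμ _)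
    · rw [W_pos hx, W_neg hy] at h
      exact absurd h (g_ne_neg hμ _ _)
    · subst hy; rw [W_pos hx, W_zero] at h
      exact absurd h (g_ne_zero hμ _)
    · rw [W_pos hx, W_pos hy] at h
      have := g_injective hμ h
      omega
  · -- surjective
    have key : ∀ t : ℤ, 0 < t → ∃ x, Wfun k μ x = t := by
      intro t ht
      rcases g_surj hμ t.toNat (by omega) with ⟨n, hn⟩ | ⟨n, hn⟩
      · refine ⟨(n : ℤ) + 1, ?_⟩
        rw [W_pos (by omega)]
        have h1 : ((n:ℤ) + 1).toNat - 1 = n := by omega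
        rw [h1, hn]
        omega
      · refine ⟨-((n : ℤ) + 1), ?_⟩
        rw [W_neg (by omega), neg_neg]
        have h1 : ((n:ℤ) + 1).toNat - 1 = n := by omega
        rw [h1, hn]
        omega
    intro t
    rcases lt_trichotomy t 0 with h | h | h
    · obtain ⟨x, hx⟩ := key (-t) (by omega)
      exact ⟨-x, by rw [W_odd, hx, neg_neg]⟩
    · exact ⟨0, by rw [W_zero, h]⟩
    · exact key t h

noncomputable def Phi (k : ℕ) (μ : ℕ → ℤ) (hμ : μ ∈ kStrictPartitions k) : Equiv.Perm ℤ :=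
  Equiv.ofBijective (Wfun k μ) (W_bijective hμ)

lemma Phi_apply (hμ : μ ∈ kStrictPartitions k) (x : ℤ) : Phi k μ hμ x = Wfun k μ x := rfl

lemma Phi_signed (hμ : μ ∈ kStrictPartitions k) : IsSignedPerm (Phi k μ hμ) := by
  constructor
  · intro i
    rw [Phi_apply, Phi_apply, W_odd]
  · set N : ℕ := k + CC k μ + (μ 0).toNat + mI k μ with hN
    apply Set.Finite.subset (Set.finite_Icc (-(N:ℤ) - 1) ((N:ℤ) + 1))
    intro x hx
    simp only [Set.mem_setOf_eq, Phi_apply] at hx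
    simp only [Set.mem_Icc]
    by_contra hc
    push_neg at hc
    apply hx
    rcases lt_trichotomy x 0 with hsx | hsx | hsx
    · have hneg : x < -(N:ℤ) - 1 := by
        by_contra h'
        have := hc (by omega)
        omega
      rw [W_neg (by omega)]
      have h1 : N ≤ (-x).toNat - 1 := by omega
      rw [g_eventual hμ _ h1]
      omega
    · rw [hsx, W_zero]
    · have hpos : (N:ℤ) + 1 < x := by
        by_contra h'
        have := hc (by omega)
        omega
      rw [W_pos (by omega)]
      have h1 : N ≤ x.toNat - 1 := by omega
      rw [g_eventual hμ _ h1]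
      omega

lemma Phi_grassmannian (hμ : μ ∈ kStrictPartitions k) : IsKGrassmannian k (Phi k μ hμ) := by
  refine ⟨?_, ?_, ?_⟩
  · intro j hj hjk
    rw [Phi_apply, W_pos (by exact_mod_cast Nat.pos_of_ne_zero (by omega))]
    have h1 : ((j:ℤ)).toNat - 1 = j - 1 := by omega
    rw [h1]
    exact g_pos_cases (by omega)
  · intro j hj hjk
    have e1 : ((j:ℤ)).toNat - 1 = j - 1 := by omega
    have e2 : ((j:ℤ) + 1).toNat - 1 = j := by omega
    rw [Phi_apply, Phi_apply, W_pos (by omega), W_pos (by omega), e1, e2,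
      g_head (by omega), g_head (by omega)]
    exact_mod_cast eE_strictMono (k := k) (μ := μ) (hIdx_strictMono hμ (by omega) (by omega))
  · intro i hi
    have e1 : ((k:ℤ) + (i:ℤ)).toNat - 1 = k + (i - 1) := by omega
    have e2 : ((k:ℤ) + (i:ℤ) + 1).toNat - 1 = k + i := by omega
    rw [Phi_apply, Phi_apply, W_pos (by omega), W_pos (by omega), e1, e2]
    set a : ℕ := i - 1 with ha
    have hia : i = a + 1 := by omega
    rcases Nat.lt_or_ge (a + 1) (mI k μ) with h1 | h1
    · -- both mid
      rw [g_mid (by omega) (by omega), g_mid (by omega) (by omega)]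
      have e3 : k + a - k = a := by omega
      have e4 : k + i - k = a + 1 := by omega
      rw [e3, e4]
      have := mu_strict_at hμ (show a < mI k μ by omega)
      omega
    · rcases Nat.lt_or_ge a (mI k μ) with h2 | h2
      · -- mid then tail
        have hneg : gfun k μ (k + a) < 0 := g_mid_neg hμ (by omega) (by omega)
        have hpos : 0 < gfun k μ (k + i) := g_pos_cases (by omega)
        omega
      · -- both tail
        rw [g_tail (by omega) (by omega), g_tail (by omega) (by omega)]
        have e3 : k + a - k = a := by omega
        have e4 : k + i - k = a + 1 := by omega
        rw [e3, e4]
        exact_mod_cast eE_strictMono (k := k) (μ := μ) (TT_lt hμ h2 (by omega))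

lemma lamOf_succ (w : Equiv.Perm ℤ) (i : ℕ) :
    lamOf k w (i + 1) =
      if w ((k : ℤ) + i + 1) < 0 then (k : ℤ) - w ((k : ℤ) + i + 1)
      else (((Finset.Icc 1 k)).filter fun j : ℕ => w ((k : ℤ) + i + 1) < w (j : ℤ)).card := by
  have harg : (k : ℤ) + ((i + 1 : ℕ) : ℤ) = (k : ℤ) + i + 1 := by push_cast; ring
  rw [lamOf, harg]

lemma Ffin_filter_card (hμ : μ ∈ kStrictPartitions k) {i : ℕ} (hi : mI k μ ≤ i) :
    ((Ffin k μ).filter (fun r => r ≤ TT k μ i)).card = k - (μ i).toNat := by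
  rcases Nat.lt_or_ge i (CC k μ) with hC | hC
  · have claim1 : (Ffin k μ).filter (fun r => r ≤ TT k μ i)
        = Finset.range (TT k μ i + 1) \ usedF k μ := by
      ext r
      simp only [Ffin, mem_filter, mem_sdiff, mem_range]
      constructor
      · rintro ⟨⟨h1, h2⟩, h3⟩
        exact ⟨by omega, h2⟩
      · rintro ⟨h1, h2⟩
        have h3 : TT k μ i < TT k μ (CC k μ) := TT_lt hμ hi hC
        rw [TT_CC hμ] at h3
        exact ⟨⟨by omega, h2⟩, by omega⟩
    have claim2 : Finset.range (TT k μ i + 1) ∩ usedF k μ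
        = (Finset.Ico (mI k μ) (i + 1)).image (TT k μ) := by
      ext r
      simp only [mem_inter, mem_range, usedF, mem_image, mem_Ico]
      constructor
      · rintro ⟨h1, n, ⟨hn1, hn2⟩, rfl⟩
        refine ⟨n, ⟨hn1, ?_⟩, rfl⟩
        by_contra h'
        have := TT_lt hμ hi (show i < n by omega)
        omega
      · rintro ⟨n, ⟨hn1, hn2⟩, rfl⟩
        have h1 : TT k μ n ≤ TT k μ i := by
          rcases Nat.eq_or_lt_of_le (show n ≤ i by omega) with h' | h'
          · rw [h']
          · exact le_of_lt (TT_lt hμ hn1 h')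
        exact ⟨by omega, n, ⟨hn1, by omega⟩, rfl⟩
    have hcard2 : ((Finset.Ico (mI k μ) (i + 1)).image (TT k μ)).card = i + 1 - mI k μ := by
      rw [Finset.card_image_of_injOn, Nat.card_Ico]
      intro a ha b hb hab
      simp only [coe_Ico, Set.mem_Ico] at ha hb
      by_contra hne
      rcases Nat.lt_or_ge a b with h | h
      · exact absurd hab (Nat.ne_of_lt (TT_lt hμ ha.1 h))
      · exact absurd hab.symm (Nat.ne_of_lt (TT_lt hμ hb.1 (by omega)))
    rw [claim1]
    have h3 := Finset.card_sdiff_add_card_inter (Finset.range (TT k μ i + 1)) (usedF k μ)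
    rw [claim2, hcard2, card_range] at h3
    have h4 := mu_toNat_le hμ hi
    simp only [TT] at h3 ⊢
    omega
  · -- i ≥ CC : all of Ffin is ≤ TT i
    have hmu : μ i = 0 := Bnd_spec hμ i (le_trans (le_max_right _ _) hC)
    have : (Ffin k μ).filter (fun r => r ≤ TT k μ i) = Ffin k μ := by
      apply Finset.filter_true_of_mem
      intro r hr
      simp only [Ffin, mem_sdiff, mem_range] at hr
      rw [TT_large hμ hC]
      omega
    rw [this, Ffin_card hμ, hmu]
    simp

lemma Phi_nat_apply (hμ : μ ∈ kStrictPartitions k) {j : ℕ} (hj : 1 ≤ j) :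
    Phi k μ hμ (j : ℤ) = gfun k μ (j - 1) := by
  rw [Phi_apply, W_pos (by exact_mod_cast hj)]
  have h1 : ((j:ℤ)).toNat - 1 = j - 1 := by omega
  rw [h1]

lemma lamOf_Phi (hμ : μ ∈ kStrictPartitions k) (i : ℕ) :
    lamOf k (Phi k μ hμ) (i + 1) = μ i := by
  rw [lamOf_succ]
  have harg : ((k : ℤ) + i + 1) = ((k + i + 1 : ℕ) : ℤ) := by push_cast; ring
  have hval : Phi k μ hμ ((k : ℤ) + i + 1) = gfun k μ (k + i) := by
    rw [harg, Phi_nat_apply hμ (by omega)]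
    have h1 : k + i + 1 - 1 = k + i := by omega
    rw [h1]
  have hki : k + i - k = i := by omega
  rcases Nat.lt_or_ge i (mI k μ) with hi | hi
  · -- negative case
    have hneg : gfun k μ (k + i) = (k : ℤ) - μ i := by
      rw [g_mid (by omega) (by omega), hki]
    rw [hval, hneg]
    have hik : (k : ℤ) < μ i := (mI_spec hμ i).2 hi
    rw [if_pos (by omega)]
    ring
  · -- positive case
    have hposv : gfun k μ (k + i) = (eE k μ (TT k μ i) : ℤ) := by
      rw [g_tail (by omega) (by omega), hki]
    have hpos : (0:ℤ) < gfun k μ (k + i) := g_pos_cases (by omega)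
    rw [hval, if_neg (by omega), hposv]
    -- compute the cardinality
    have step1 : ((Finset.Icc 1 k).filter fun j : ℕ =>
        (eE k μ (TT k μ i) : ℤ) < Phi k μ hμ (j : ℤ)).card
        = ((Finset.range k).filter fun j' => TT k μ i < hIdx k μ j').card := by
      refine Finset.card_bij' (fun j _ => j - 1) (fun j' _ => j' + 1) ?hi ?hj ?left ?right
      case hi =>
        intro j hj
        simp only [mem_filter, mem_Icc] at hj
        obtain ⟨⟨hj1, hj2⟩, hj3⟩ := hj
        rw [Phi_nat_apply hμ hj1, g_head (by omega)] at hj3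
        simp only [mem_filter, mem_range]
        have : TT k μ i < hIdx k μ (j-1) := by
          by_contra h'
          have := (eE_strictMono (k := k) (μ := μ)).le_iff_le.2
            (show hIdx k μ (j-1) ≤ TT k μ i by omega)
          omega
        exact ⟨by omega, this⟩
      case hj =>
        intro j' hj'
        simp only [mem_filter, mem_range] at hj'
        simp only [mem_filter, mem_Icc]
        refine ⟨⟨by omega, by omega⟩, ?_⟩
        rw [Phi_nat_apply hμ (by omega), g_head (by omega)]
        have e1 : j' + 1 - 1 = j' := by omega
        rw [e1]
        exact_mod_cast eE_strictMono (k := k) (μ := μ) hj'.2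
      case left =>
        intro j hj
        simp only [mem_filter, mem_Icc] at hj
        show j - 1 + 1 = j
        omega
      case right =>
        intro j' _
        show j' + 1 - 1 = j'
        omega
    have step2 : ((Finset.range k).filter fun j' => hIdx k μ j' ≤ TT k μ i).card
        = ((Ffin k μ).filter (fun r => r ≤ TT k μ i)).card := by
      apply Finset.card_bij (fun j' _ => hIdx k μ j')
      · intro j' hj'
        simp only [mem_filter, mem_range] at hj'
        exact mem_filter.2 ⟨hIdx_mem hμ hj'.1, hj'.2⟩
      · intro a ha b hb hab
        simp only [mem_filter, mem_range] at ha hb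
        by_contra hne
        rcases Nat.lt_or_ge a b with h | h
        · exact absurd hab (Nat.ne_of_lt (hIdx_strictMono hμ h hb.1))
        · exact absurd hab.symm (Nat.ne_of_lt (hIdx_strictMono hμ (by omega) ha.1))
      · intro r hr
        simp only [mem_filter] at hr
        obtain ⟨n, hn, hidx⟩ := hIdx_surj hμ hr.1
        exact ⟨n, mem_filter.2 ⟨mem_range.2 hn, by rw [hidx]; exact hr.2⟩, hidx⟩
    have step3 := Finset.card_filter_add_card_filter_not
      (s := Finset.range k) (p := fun j' => TT k μ i < hIdx k μ j')
    have hnegeq : ((Finset.range k).filter fun j' => ¬ TT k μ i < hIdx k μ j').card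
        = ((Finset.range k).filter fun j' => hIdx k μ j' ≤ TT k μ i).card := by
      congr 1
      apply Finset.filter_congr
      intro j' _
      exact not_lt
    rw [card_range] at step3
    rw [step1]
    have step4 := Ffin_filter_card hμ hi
    have h4 := mu_toNat_le hμ hi
    have h5 : 0 ≤ μ i := hμ.1 i
    rw [hnegeq, step2, step4] at step3
    omega

/-! ### Permutation-side lemmas -/

section PermSide

variable {w : Equiv.Perm ℤ}

lemma w_zero (hs : IsSignedPerm w) : w 0 = 0 := by
  have h := hs.1 0
  rw [neg_zero] at h
  omega

lemma tail_succ (hg : IsKGrassmannian k w) (n : ℕ) :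
    w ((k : ℤ) + n + 1) < w ((k : ℤ) + n + 2) := by
  have h := hg.2.2 (n + 1) (by omega)
  have e1 : ((n + 1 : ℕ) : ℤ) = (n : ℤ) + 1 := by push_cast; ring
  rw [e1] at h
  have e3 : (k : ℤ) + (n : ℤ) + 2 = (k : ℤ) + ((n : ℤ) + 1) + 1 := by ring
  rw [e3]
  have e2 : (k : ℤ) + ((n : ℤ) + 1) = (k : ℤ) + (n : ℤ) + 1 := by ring
  rwa [e2] at h

lemma tail_strictMono (hg : IsKGrassmannian k w) :
    StrictMono (fun n : ℕ => w ((k : ℤ) + n + 1)) := by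
  apply strictMono_nat_of_lt_succ
  intro n
  have := tail_succ hg n
  have e1 : (k : ℤ) + ((n + 1 : ℕ) : ℤ) + 1 = (k : ℤ) + n + 2 := by push_cast; ring
  simp only [e1]
  exact this

lemma head_lt (hg : IsKGrassmannian k w) {a b : ℕ} (ha : 1 ≤ a) (hab : a < b) (hb : b ≤ k) :
    w (a : ℤ) < w (b : ℤ) := by
  induction b with
  | zero => omega
  | succ n ih =>
    have h : w (n : ℤ) < w ((n + 1 : ℕ) : ℤ) := by
      have := hg.2.1 n (by omega) (by omega)
      have e1 : ((n + 1 : ℕ) : ℤ) = (n : ℤ) + 1 := by push_cast; ring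
      rw [e1]
      exact this
    rcases Nat.lt_or_ge a n with h' | h'
    · exact lt_trans (ih h' (by omega)) h
    · have : a = n := by omega
      subst this
      exact h

lemma tail_ne_zero (hs : IsSignedPerm w) (n : ℕ) : w ((k : ℤ) + n + 1) ≠ 0 := by
  intro h
  have h0 : w 0 = 0 := w_zero hs
  have := w.injective (h.trans h0.symm)
  omega

lemma head_pos (hg : IsKGrassmannian k w) {j : ℕ} (hj : 1 ≤ j) (hjk : j ≤ k) :
    0 < w (j : ℤ) := hg.1 j hj hjk

/-- eventual identity bound -/
lemma exists_bound (hs : IsSignedPerm w) : ∃ N : ℤ, 0 ≤ N ∧ ∀ x : ℤ, N < x → w x = x := by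
  obtain ⟨N, hN⟩ := hs.2.bddAbove
  refine ⟨max N 0, le_max_right _ _, fun x hx => ?_⟩
  by_contra h
  have := hN (show x ∈ {i | w i ≠ i} from h)
  have h2 : x ≤ max N 0 := le_trans this (le_max_left _ _)
  omega

lemma lamOf_spec_neg {n : ℕ} (hn : w ((k : ℤ) + n + 1) < 0) :
    lamOf k w (n + 1) = (k : ℤ) - w ((k : ℤ) + n + 1) := by
  rw [lamOf_succ, if_pos hn]

lemma lamOf_spec_pos {n : ℕ} (hn : ¬ w ((k : ℤ) + n + 1) < 0) :
    lamOf k w (n + 1) =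
      (((Finset.Icc 1 k)).filter fun j : ℕ => w ((k : ℤ) + n + 1) < w (j : ℤ)).card := by
  rw [lamOf_succ, if_neg hn]

lemma lamOf_card_le (w : Equiv.Perm ℤ) (n : ℕ) :
    (((Finset.Icc 1 k)).filter fun j : ℕ => w ((k : ℤ) + n + 1) < w (j : ℤ)).card ≤ k := by
  calc (((Finset.Icc 1 k)).filter fun j : ℕ => w ((k : ℤ) + n + 1) < w (j : ℤ)).card
      ≤ (Finset.Icc 1 k).card := Finset.card_filter_le _ _
    _ = k := by rw [Nat.card_Icc]; omega

lemma lamOf_mapsTo (hs : IsSignedPerm w) (hg : IsKGrassmannian k w) :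
    (fun i : ℕ => lamOf k w (i + 1)) ∈ kStrictPartitions k := by
  have hmono : ∀ n : ℕ, lamOf k w (n + 1 + 1) ≤ lamOf k w (n + 1) ∧
      (w ((k:ℤ) + n + 1) < 0 → lamOf k w (n + 1 + 1) < lamOf k w (n + 1)) := by
    intro n
    have hlt : w ((k:ℤ) + n + 1) < w ((k:ℤ) + ((n+1:ℕ):ℤ) + 1) := by
      have h := tail_succ hg n
      have e1 : (k:ℤ) + ((n+1:ℕ):ℤ) + 1 = (k:ℤ) + n + 2 := by push_cast; ring
      rw [e1]
      exact h
    rcases lt_or_ge (w ((k:ℤ) + ((n+1:ℕ):ℤ) + 1)) 0 with h2 | h2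
    · -- both negative
      have h1 : w ((k:ℤ) + n + 1) < 0 := by omega
      rw [lamOf_spec_neg h1, lamOf_spec_neg h2]
      constructor <;> intros <;> omega
    · rw [lamOf_spec_pos (by omega)]
      rcases lt_or_ge (w ((k:ℤ) + n + 1)) 0 with h1 | h1
      · -- neg then pos
        rw [lamOf_spec_neg h1]
        have := lamOf_card_le (k := k) w (n+1)
        constructor <;> intros <;> [skip; skip] <;> omega
      · -- both positive
        rw [lamOf_spec_pos (by omega)]
        have hsub : (((Finset.Icc 1 k)).filter fun j : ℕ =>
            w ((k : ℤ) + ((n+1:ℕ):ℤ) + 1) < w (j : ℤ))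
            ⊆ (((Finset.Icc 1 k)).filter fun j : ℕ => w ((k : ℤ) + n + 1) < w (j : ℤ)) := by
          apply Finset.monotone_filter_right
          intro j hj
          omega
        have := Finset.card_le_card hsub
        constructor
        · exact_mod_cast this
        · intro h; omega
  refine ⟨?_, ?_, ?_, ?_⟩
  · intro i
    show 0 ≤ lamOf k w (i + 1)
    rcases lt_or_ge (w ((k:ℤ) + i + 1)) 0 with h | h
    · rw [lamOf_spec_neg h]; omega
    · rw [lamOf_spec_pos (by omega)]; positivity
  · intro i
    show lamOf k w (i + 1 + 1) ≤ lamOf k w (i + 1)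
    exact (hmono i).1
  · -- finite support
    obtain ⟨N, hN0, hN⟩ := exists_bound hs
    set M : ℕ := (Finset.Icc 1 k).sup (fun j : ℕ => (w (j:ℤ)).toNat) with hM
    set I : ℕ := N.toNat + M + k + 1 with hI
    apply Set.Finite.subset (Set.finite_Iio I)
    intro i hi
    simp only [Set.mem_setOf_eq] at hi
    simp only [Set.mem_Iio]
    by_contra hc
    push_neg at hc
    apply hi
    show lamOf k w (i + 1) = 0
    have hid : w ((k:ℤ) + i + 1) = (k:ℤ) + i + 1 := hN _ (by omega)
    rw [lamOf_spec_pos (by omega)]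
    have hempty : ((Finset.Icc 1 k).filter fun j : ℕ =>
        w ((k : ℤ) + i + 1) < w (j : ℤ)) = ∅ := by
      apply Finset.filter_false_of_mem
      intro j hj
      simp only [mem_Icc] at hj
      have hjpos : 0 < w (j:ℤ) := head_pos hg hj.1 hj.2
      have hjle : (w (j:ℤ)).toNat ≤ M := Finset.le_sup (f := fun j : ℕ => (w (j:ℤ)).toNat)
        (mem_Icc.2 hj)
      rw [hid]
      omega
    rw [hempty]
    simp
  · intro i hi
    show lamOf k w (i + 1 + 1) < lamOf k w (i + 1)
    have hi' : (k:ℤ) < lamOf k w (i + 1) := hi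
    have hneg : w ((k:ℤ) + i + 1) < 0 := by
      by_contra h
      rw [lamOf_spec_pos h] at hi'
      have := lamOf_card_le (k := k) w i
      omega
    exact (hmono i).2 hneg

section Recover

variable (hs : IsSignedPerm w) (hg : IsKGrassmannian k w)

/-- the partition attached to `w` -/
def lamSeq (k : ℕ) (w : Equiv.Perm ℤ) : ℕ → ℤ := fun i => lamOf k w (i + 1)

lemma lamSeq_mem (hs : IsSignedPerm w) (hg : IsKGrassmannian k w) :
    lamSeq k w ∈ kStrictPartitions k := lamOf_mapsTo hs hg

lemma neg_iff (hs : IsSignedPerm w) (hg : IsKGrassmannian k w) (i : ℕ) :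
    w ((k:ℤ) + i + 1) < 0 ↔ i < mI k (lamSeq k w) := by
  rw [← mI_spec (lamSeq_mem hs hg) i]
  show w ((k:ℤ) + i + 1) < 0 ↔ (k:ℤ) < lamOf k w (i+1)
  constructor
  · intro h
    rw [lamOf_spec_neg h]
    omega
  · intro h
    by_contra h'
    rw [lamOf_spec_pos h'] at h
    have := lamOf_card_le (k := k) w i
    omega

lemma tail_neg_val (hs : IsSignedPerm w) (hg : IsKGrassmannian k w) {i : ℕ}
    (hi : i < mI k (lamSeq k w)) :
    w ((k:ℤ) + i + 1) = (k:ℤ) - lamSeq k w i := by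
  have hneg : w ((k:ℤ) + i + 1) < 0 := (neg_iff hs hg i).2 hi
  show w ((k:ℤ) + i + 1) = (k:ℤ) - lamOf k w (i+1)
  rw [lamOf_spec_neg hneg]
  ring

lemma tail_pos_val (hs : IsSignedPerm w) (hg : IsKGrassmannian k w) {i : ℕ}
    (hi : mI k (lamSeq k w) ≤ i) : 0 < w ((k:ℤ) + i + 1) := by
  have h1 : ¬ w ((k:ℤ) + i + 1) < 0 := by rw [neg_iff hs hg i]; omega
  have h2 := tail_ne_zero (k := k) hs i
  omega

lemma mem_Dset_w (hs : IsSignedPerm w) (hg : IsKGrassmannian k w) {x : ℕ} :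
    x ∈ Dset k (lamSeq k w) ↔ ∃ i < mI k (lamSeq k w), (x:ℤ) = - w ((k:ℤ) + i + 1) := by
  rw [mem_Dset (lamSeq_mem hs hg)]
  constructor
  · rintro ⟨i, hi, hx⟩
    exact ⟨i, hi, by rw [tail_neg_val hs hg hi]; omega⟩
  · rintro ⟨i, hi, hx⟩
    exact ⟨i, hi, by rw [hx, tail_neg_val hs hg hi]; ring⟩

lemma pP_w (hs : IsSignedPerm w) (hg : IsKGrassmannian k w) {y : ℤ} (hy : 0 < y)
    (hwy : 0 < w y) : pP k (lamSeq k w) ((w y).toNat) := by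
  constructor
  · omega
  · intro hD
    obtain ⟨i, hi, hx⟩ := (mem_Dset_w hs hg).1 hD
    have h1 : w y = - w ((k:ℤ) + i + 1) := by omega
    have h2 : w (-((k:ℤ) + i + 1)) = - w ((k:ℤ) + i + 1) := hs.1 _
    have := w.injective (h1.trans h2.symm)
    omega

/-- The key counting identity. -/
lemma count_key (hs : IsSignedPerm w) (hg : IsKGrassmannian k w) {n : ℕ}
    (hn : mI k (lamSeq k w) ≤ n) :
    Nat.count (pP k (lamSeq k w)) ((w ((k:ℤ) + n + 1)).toNat) = TT k (lamSeq k w) n := by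
  set μ := lamSeq k w with hμdef
  have hμ : μ ∈ kStrictPartitions k := lamOf_mapsTo hs hg
  set m := mI k μ with hm
  set c : ℤ := w ((k:ℤ) + n + 1) with hc
  have hcpos : 0 < c := tail_pos_val hs hg hn
  rw [Nat.count_eq_card_filter_range]
  -- bijection with positions
  have step1 : ((Finset.range c.toNat).filter (pP k μ)).card
      = ((Finset.Icc (1:ℤ) ((k:ℤ)+n)).filter (fun y => 0 < w y ∧ w y < c)).card := by
    refine Finset.card_nbij' (fun x => w.symm (x : ℤ)) (fun y => (w y).toNat)
      ?hi ?hj ?left ?right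
    case hi =>
      intro x hx
      beta_reduce
      simp only [Finset.mem_coe, mem_filter, mem_range, pP] at hx
      obtain ⟨hx1, hx2, hx3⟩ := hx
      have hwx : w (w.symm (x:ℤ)) = (x:ℤ) := w.apply_symm_apply _
      set y := w.symm (x:ℤ) with hy
      have hxc : (x:ℤ) < c := by omega
      simp only [Finset.mem_coe, mem_filter, mem_Icc]
      refine ⟨⟨?_, ?_⟩, by omega, by omega⟩
      · -- 1 ≤ y
        by_contra h'
        push_neg at h'
        have hyne : y ≠ 0 := by
          intro h0
          rw [h0, w_zero hs] at hwx
          omega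
        have hyneg : y < 0 := by omega
        have hwny : w (-y) = -(x:ℤ) := by rw [← hwx]; exact hs.1 y
        -- -y is a positive position with negative value, so -y > k
        have hnyk : ¬ (-y ≤ k) := by
          intro hle
          have h1 : 1 ≤ (-y).toNat := by omega
          have h2 : (-y).toNat ≤ k := by omega
          have := head_pos hg h1 h2
          have he : ((-y).toNat : ℤ) = -y := by omega
          rw [he] at this
          omega
        set i := (-y - (k:ℤ) - 1).toNat with hi
        have hiy : -y = (k:ℤ) + i + 1 := by omega
        have hwi : w ((k:ℤ) + i + 1) < 0 := by rw [← hiy, hwny]; omega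
        have him : i < m := (neg_iff hs hg i).1 hwi
        have : x ∈ Dset k μ := (mem_Dset_w hs hg).2 ⟨i, him, by rw [← hiy, hwny]; ring⟩
        exact hx3 this
      · -- y ≤ k + n
        by_contra h'
        push_neg at h'
        set i := (y - (k:ℤ) - 1).toNat with hi
        have hiy : y = (k:ℤ) + i + 1 := by omega
        have hni : n ≤ i := by omega
        have hmono := (tail_strictMono hg).monotone hni
        rw [← hc, ← hiy, hwx] at hmono
        omega
    case hj =>
      intro y hy
      simp only [Finset.mem_coe, mem_filter, mem_Icc] at hy
      obtain ⟨⟨hy1, hy2⟩, hy3, hy4⟩ := hy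
      simp only [Finset.mem_coe, mem_filter, mem_range]
      refine ⟨by omega, pP_w hs hg (by omega) hy3⟩
    case left =>
      intro x _
      show (w (w.symm (x:ℤ))).toNat = x
      rw [w.apply_symm_apply]
      omega
    case right =>
      intro y hy
      simp only [Finset.mem_coe, mem_filter, mem_Icc] at hy
      show w.symm (((w y).toNat : ℤ)) = y
      have : ((w y).toNat : ℤ) = w y := by omega
      rw [this, w.symm_apply_apply]
  rw [step1]
  -- split into head and tail parts
  have hsplit : (Finset.Icc (1:ℤ) ((k:ℤ)+n)).filter (fun y => 0 < w y ∧ w y < c)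
      = ((Finset.Icc (1:ℤ) (k:ℤ)).filter (fun y => w y < c))
        ∪ ((Finset.Icc ((k:ℤ)+1) ((k:ℤ)+n)).filter (fun y => 0 < w y ∧ w y < c)) := by
    ext y
    simp only [mem_filter, mem_union, mem_Icc]
    constructor
    · rintro ⟨⟨hy1, hy2⟩, hy3, hy4⟩
      rcases le_or_gt y (k:ℤ) with h | h
      · exact Or.inl ⟨⟨hy1, h⟩, hy4⟩
      · exact Or.inr ⟨⟨by omega, hy2⟩, hy3, hy4⟩
    · rintro (⟨⟨hy1, hy2⟩, hy3⟩ | ⟨⟨hy1, hy2⟩, hy3, hy4⟩)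
      · have hpos : 0 < w y := by
          have h1 : 1 ≤ y.toNat := by omega
          have h2 : y.toNat ≤ k := by omega
          have := head_pos hg h1 h2
          have he : (y.toNat : ℤ) = y := by omega
          rwa [he] at this
        exact ⟨⟨hy1, by omega⟩, hpos, hy3⟩
      · exact ⟨⟨by omega, hy2⟩, hy3, hy4⟩
  have hdisj : Disjoint ((Finset.Icc (1:ℤ) (k:ℤ)).filter (fun y => w y < c))
      ((Finset.Icc ((k:ℤ)+1) ((k:ℤ)+n)).filter (fun y => 0 < w y ∧ w y < c)) := by
    rw [Finset.disjoint_left]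
    intro y hy1 hy2
    simp only [mem_filter, mem_Icc] at hy1 hy2
    omega
  rw [hsplit, Finset.card_union_of_disjoint hdisj]
  -- head part
  have hposn : ¬ w ((k:ℤ) + n + 1) < 0 := by omega
  have hμn : μ n = (((Finset.Icc 1 k).filter fun j : ℕ => c < w (j : ℤ)).card : ℤ) :=
    lamOf_spec_pos hposn
  have hcards : ((Finset.Icc (1:ℤ) (k:ℤ)).filter (fun y => c < w y)).card
      = ((Finset.Icc 1 k).filter fun j : ℕ => c < w (j : ℤ)).card := by
    refine Finset.card_nbij' (fun y => y.toNat) (fun j => (j : ℤ)) ?_ ?_ ?_ ?_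
    · intro y hy
      simp only [Finset.mem_coe, mem_filter, mem_Icc] at hy ⊢
      have he : (y.toNat : ℤ) = y := by omega
      rw [he]
      exact ⟨⟨by omega, by omega⟩, hy.2⟩
    · intro j hj
      simp only [Finset.mem_coe, mem_filter, mem_Icc] at hj ⊢
      exact ⟨⟨by omega, by exact_mod_cast hj.1.2⟩, hj.2⟩
    · intro y hy
      simp only [Finset.mem_coe, mem_filter, mem_Icc] at hy
      show ((y.toNat : ℕ) : ℤ) = y
      omega
    · intro j _
      show ((j:ℤ)).toNat = j
      omega
  have hne : ∀ y ∈ Finset.Icc (1:ℤ) (k:ℤ), w y ≠ c := by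
    intro y hy hEq
    simp only [mem_Icc] at hy
    have := w.injective (hEq.trans hc)
    omega
  have hcongr : ((Finset.Icc (1:ℤ) (k:ℤ)).filter (fun y => w y < c))
      = ((Finset.Icc (1:ℤ) (k:ℤ)).filter (fun y => ¬ c < w y)) := by
    apply Finset.filter_congr
    intro y hy
    have := hne y hy
    constructor <;> intro <;> omega
  have hkcard : (Finset.Icc (1:ℤ) (k:ℤ)).card = k := by
    rw [Int.card_Icc]
    omega
  have hsum := Finset.card_filter_add_card_filter_not
    (s := Finset.Icc (1:ℤ) (k:ℤ)) (p := fun y => c < w y)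
  rw [hkcard, hcards] at hsum
  have hhead : ((Finset.Icc (1:ℤ) (k:ℤ)).filter (fun y => w y < c)).card
      = k - (μ n).toNat := by
    rw [hcongr]
    omega
  -- tail part
  have htail : ((Finset.Icc ((k:ℤ)+1) ((k:ℤ)+n)).filter (fun y => 0 < w y ∧ w y < c)).card
      = n - m := by
    have : (Finset.Ico m n).card = n - m := Nat.card_Ico m n
    rw [← this]
    refine Finset.card_nbij' (fun y => (y - k - 1).toNat) (fun i => (k:ℤ) + i + 1)
      ?_ ?_ ?_ ?_
    · intro y hy
      simp only [Finset.mem_coe, mem_filter, mem_Icc] at hy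
      obtain ⟨⟨hy1, hy2⟩, hy3, hy4⟩ := hy
      simp only [Finset.mem_coe, mem_Ico]
      set i := (y - (k:ℤ) - 1).toNat with hidef
      have hiy : y = (k:ℤ) + i + 1 := by omega
      refine ⟨?_, by omega⟩
      by_contra h'
      push_neg at h'
      have := (neg_iff hs hg i).2 h'
      rw [← hiy] at this
      omega
    · intro i hi
      simp only [Finset.mem_coe, mem_Ico] at hi
      simp only [Finset.mem_coe, mem_filter, mem_Icc]
      have h1 : 0 < w ((k:ℤ) + i + 1) := tail_pos_val hs hg hi.1
      have h2 : w ((k:ℤ) + i + 1) < c := by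
        rw [hc]
        exact tail_strictMono hg hi.2
      exact ⟨⟨by omega, by omega⟩, h1, h2⟩
    · intro y hy
      simp only [Finset.mem_coe, mem_filter, mem_Icc] at hy
      show (k:ℤ) + ((y - k - 1).toNat : ℤ) + 1 = y
      omega
    · intro i _
      show ((k:ℤ) + i + 1 - k - 1).toNat = i
      omega
  have hTT : TT k μ n = (n - m) + (k - (μ n).toNat) := rfl
  have hkk := mu_toNat_le hμ hn
  omega

lemma tail_val_eq (hs : IsSignedPerm w) (hg : IsKGrassmannian k w) {n : ℕ}
    (hn : mI k (lamSeq k w) ≤ n) :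
    (eE k (lamSeq k w) (TT k (lamSeq k w) n) : ℤ) = w ((k:ℤ) + n + 1) := by
  have hpos := tail_pos_val hs hg hn
  have hparg : (0:ℤ) < (k:ℤ) + n + 1 := by omega
  have hP := pP_w hs hg hparg hpos
  have h1 := eE_count hP
  rw [count_key hs hg hn] at h1
  rw [h1]
  omega

lemma head_val_eq (hs : IsSignedPerm w) (hg : IsKGrassmannian k w) {j : ℕ} (hj : j < k) :
    (eE k (lamSeq k w) (hIdx k (lamSeq k w) j) : ℤ) = w (((j + 1 : ℕ)) : ℤ) := by
  set μ := lamSeq k w with hμdef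
  have hμ : μ ∈ kStrictPartitions k := lamSeq_mem hs hg
  -- head values are positive
  have hw_pos : ∀ a : ℕ, a < k → 0 < w (((a + 1 : ℕ)) : ℤ) := fun a ha =>
    head_pos hg (by omega) (by omega)
  have hparg : ∀ a : ℕ, (0:ℤ) < ((a + 1 : ℕ) : ℤ) := fun a => by positivity
  set ψ : Fin k → ℕ := fun j => Nat.count (pP k μ) ((w (((j.val + 1 : ℕ)) : ℤ)).toNat)
    with hψ
  have heψ : ∀ j : Fin k, eE k μ (ψ j) = (w (((j.val + 1 : ℕ)) : ℤ)).toNat := fun j =>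
    eE_count (pP_w hs hg (hparg j.val) (hw_pos j.val j.2))
  -- w (k + (CC k μ) + 1) dominates all head values
  have hμC : μ (CC k μ) = 0 := Bnd_spec hμ (CC k μ) (le_max_right _ _)
  have hCm : (mI k μ) ≤ (CC k μ) := m_le_C
  have hCpos : 0 < w ((k:ℤ) + (CC k μ) + 1) := tail_pos_val hs hg hCm
  have hfilterC : ∀ a : ℕ, 1 ≤ a → a ≤ k → ¬ (w ((k:ℤ) + (CC k μ) + 1) < w (a : ℤ)) := by
    intro a ha hak hlt
    have h0 : μ (CC k μ) = (((Finset.Icc 1 k).filter fun j : ℕ =>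
        w ((k:ℤ) + (CC k μ) + 1) < w (j : ℤ)).card : ℤ) := lamOf_spec_pos (by omega)
    rw [hμC] at h0
    have hcard0 : ((Finset.Icc 1 k).filter fun j : ℕ =>
        w ((k:ℤ) + (CC k μ) + 1) < w (j : ℤ)).card = 0 := by omega
    rw [Finset.card_eq_zero] at hcard0
    have : a ∈ ((Finset.Icc 1 k).filter fun j : ℕ =>
        w ((k:ℤ) + (CC k μ) + 1) < w (j : ℤ)) := mem_filter.2 ⟨mem_Icc.2 ⟨ha, hak⟩, hlt⟩
    rw [hcard0] at this
    exact absurd this (Finset.notMem_empty a)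
  have hdom : ∀ a : ℕ, a < k → w (((a + 1 : ℕ)) : ℤ) < w ((k:ℤ) + (CC k μ) + 1) := by
    intro a ha
    have h1 := hfilterC (a+1) (by omega) (by omega)
    have h2 : w (((a + 1 : ℕ)) : ℤ) ≠ w ((k:ℤ) + (CC k μ) + 1) := by
      intro hEq
      have := w.injective hEq
      omega
    omega
  -- ψ is strictly monotone with values in Ffin
  have hmono : StrictMono ψ := by
    intro a b hab
    have h1 : w (((a.val + 1 : ℕ)) : ℤ) < w (((b.val + 1 : ℕ)) : ℤ) :=
      head_lt hg (by omega) (by exact_mod_cast Nat.add_lt_add_right hab 1) (by omega)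
    have h2 : eE k μ (ψ a) < eE k μ (ψ b) := by
      rw [heψ a, heψ b]
      have := hw_pos a.val a.2
      omega
    exact (eE_strictMono (k := k) (μ := μ)).lt_iff_lt.1 h2
  have hmem : ∀ j : Fin k, ψ j ∈ Ffin k μ := by
    intro j
    simp only [Ffin, mem_sdiff, mem_range]
    constructor
    · -- bound
      have h1 : eE k μ (ψ j) < eE k μ (CC k μ - (mI k μ) + k) := by
        rw [heψ j]
        have h2 := hdom j.val j.2
        have h3 : (eE k μ (TT k μ (CC k μ)) : ℤ) = w ((k:ℤ) + (CC k μ) + 1) := tail_val_eq hs hg hCm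
        rw [TT_CC hμ] at h3
        have := hw_pos j.val j.2
        omega
      exact (eE_strictMono (k := k) (μ := μ)).lt_iff_lt.1 h1
    · -- not used
      intro hused
      simp only [usedF, mem_image, mem_Ico] at hused
      obtain ⟨n, ⟨hn1, hn2⟩, hTn⟩ := hused
      have h3 : (eE k μ (TT k μ n) : ℤ) = w ((k:ℤ) + n + 1) := tail_val_eq hs hg hn1
      rw [hTn] at h3
      have h4 : (eE k μ (ψ j) : ℤ) = w (((j.val + 1 : ℕ)) : ℤ) := by
        rw [heψ j]
        have := hw_pos j.val j.2
        omega
      have h5 : w ((k:ℤ) + n + 1) = w (((j.val + 1 : ℕ)) : ℤ) := by omega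
      have := w.injective h5
      have hjk := j.2
      omega
  have huniq := Finset.orderEmbOfFin_unique (Ffin_card hμ) hmem hmono
  have hj' : j < (Ffin k μ).card := by rw [Ffin_card hμ]; exact hj
  have hIdxEq : hIdx k μ j = ψ ⟨j, hj⟩ := by
    rw [hIdx, dif_pos hj', huniq]
    simp only [Finset.orderEmbOfFin_apply, Fin.getElem_fin]
  rw [hIdxEq, heψ ⟨j, hj⟩]
  show ((w (((j + 1 : ℕ)) : ℤ)).toNat : ℤ) = w (((j + 1 : ℕ)) : ℤ)
  have := hw_pos j hj
  omega

lemma g_eq (hs : IsSignedPerm w) (hg : IsKGrassmannian k w) (n : ℕ) :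
    gfun k (lamSeq k w) n = w (((n + 1 : ℕ)) : ℤ) := by
  set μ := lamSeq k w with hμdef
  have hμ : μ ∈ kStrictPartitions k := lamSeq_mem hs hg
  rcases Nat.lt_or_ge n k with h | h
  · rw [g_head h]
    exact head_val_eq hs hg h
  · have harg : ((n + 1 : ℕ) : ℤ) = (k:ℤ) + (n - k : ℕ) + 1 := by push_cast; omega
    rcases Nat.lt_or_ge (n - k) (mI k μ) with h2 | h2
    · rw [g_mid h h2, harg, tail_neg_val hs hg h2]
    · rw [g_tail h h2, harg]
      exact tail_val_eq hs hg h2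

lemma Phi_lam_eq (hs : IsSignedPerm w) (hg : IsKGrassmannian k w) :
    Phi k (lamSeq k w) (lamSeq_mem hs hg) = w := by
  apply Equiv.ext
  intro x
  rw [Phi_apply]
  rcases lt_trichotomy x 0 with hx | hx | hx
  · rw [W_neg hx]
    have h1 : (-x).toNat - 1 + 1 = (-x).toNat := by omega
    rw [g_eq hs hg, h1]
    have h2 : (((-x).toNat : ℕ) : ℤ) = -x := by omega
    rw [h2]
    have h3 := hs.1 (-x)
    rw [neg_neg] at h3
    omega
  · rw [hx, W_zero, w_zero hs]
  · rw [W_pos hx, g_eq hs hg]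
    have h1 : x.toNat - 1 + 1 = x.toNat := by omega
    rw [h1]
    have h2 : ((x.toNat : ℕ) : ℤ) = x := by omega
    rw [h2]

lemma Phi_congr {μ ν : ℕ → ℤ} (hμ : μ ∈ kStrictPartitions k) (hν : ν ∈ kStrictPartitions k)
    (h : μ = ν) : Phi k μ hμ = Phi k ν hν := by
  subst h
  rfl

end Recover

end PermSide

end Stmt13

/-- The map `w ↦ λ(w)` is a bijection from the set `W_∞^{(k)}` of `k`-Grassmannian signed
permutations onto the set `𝒮𝒫^k` of `k`-strict partitions. -/
theorem stmt_13 (k : ℕ) :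
    Set.BijOn (fun w : Equiv.Perm ℤ => fun i : ℕ => lamOf k w (i + 1))
      {w : Equiv.Perm ℤ | IsSignedPerm w ∧ IsKGrassmannian k w}
      (kStrictPartitions k) := by
  refine ⟨?_, ?_, ?_⟩
  · intro w hw
    exact Stmt13.lamOf_mapsTo hw.1 hw.2
  · intro w hw v hv h
    have h1 : Stmt13.lamSeq k w = Stmt13.lamSeq k v := h
    calc w = Stmt13.Phi k (Stmt13.lamSeq k w) (Stmt13.lamSeq_mem hw.1 hw.2) :=
          (Stmt13.Phi_lam_eq hw.1 hw.2).symm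
      _ = Stmt13.Phi k (Stmt13.lamSeq k v) (Stmt13.lamSeq_mem hv.1 hv.2) :=
          Stmt13.Phi_congr _ _ h1
      _ = v := Stmt13.Phi_lam_eq hv.1 hv.2
  · intro μ hμ
    refine ⟨Stmt13.Phi k μ hμ, ⟨Stmt13.Phi_signed hμ, Stmt13.Phi_grassmannian hμ⟩, ?_⟩
    funext i
    exact Stmt13.lamOf_Phi hμ i
end
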